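/- arXiv:2310.03243 — 3 statements merged into one kernel-verified Lean document; each statement's English description precedes it below -/
import Mathlib

section
/- For every time index t ≥ 1 and every hidden layer 1 ≤ i ≤ H−1, the ℓ1-norm of the hidden state satisfies Σ_{j=1}^{L_i} |z_t^i(j)| ≤ t^i · (Π_{k=1}^{i} r_{w_k}) · (Π_{k=1}^{i} r_{v_k})^{t−1} · E^{t·i}. -/
open Finset

/-- Number of nonzero entries of a matrix. -/
noncomputable def nnz {m n : Type*} [Fintype m] [Fintype n] (A : Matrix m n ℝ) : ℕ :=
  Nat.card {p : m × n // A p.1 p.2 ≠ 0}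

/-- One time-step of the RNN: given the previous time slice `prev` of hidden states and the
current input `xt`, compute the hidden states of all layers at the current time. -/
noncomputable def zLayer (L : ℕ → ℕ)
    (w : (h : ℕ) → Matrix (Fin (L h)) (Fin (L (h - 1))) ℝ)
    (v : (h : ℕ) → Matrix (Fin (L h)) (Fin (L h)) ℝ)
    (ψ : ℕ → ℝ → ℝ)
    (prev : (h : ℕ) → Fin (L h) → ℝ) (xt : Fin (L 0) → ℝ) :
    (h : ℕ) → Fin (L h) → ℝ
  | 0 => xt
  | h + 1 => fun j =>
      ψ (h + 1) ((w (h + 1)).mulVec (zLayer L w v ψ prev xt h) j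
        + (v (h + 1)).mulVec (prev (h + 1)) j)

/-- The hidden states `hiddenState L w v ψ x t h : Fin (L h) → ℝ` of the RNN:
`hiddenState L w v ψ x t 0 = x t` for `t ≥ 1`, `hiddenState L w v ψ x 0 h = 0`, and
`hiddenState L w v ψ x t h = ψ h (w h ⬝ z_t^{h-1} + v h ⬝ z_{t-1}^h)` for `t, h ≥ 1`. -/
noncomputable def hiddenState (L : ℕ → ℕ)
    (w : (h : ℕ) → Matrix (Fin (L h)) (Fin (L (h - 1))) ℝ)
    (v : (h : ℕ) → Matrix (Fin (L h)) (Fin (L h)) ℝ)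
    (ψ : ℕ → ℝ → ℝ)
    (x : ℕ → Fin (L 0) → ℝ) : ℕ → (h : ℕ) → Fin (L h) → ℝ
  | 0 => fun _ _ => 0
  | t + 1 => zLayer L w v ψ (hiddenState L w v ψ x t) (x (t + 1))

/-- The output of the `H`-layer RNN at time `t`: `O_t = w^H z_t^{H-1}`. -/
noncomputable def output (L : ℕ → ℕ) (H : ℕ)
    (w : (h : ℕ) → Matrix (Fin (L h)) (Fin (L (h - 1))) ℝ)
    (v : (h : ℕ) → Matrix (Fin (L h)) (Fin (L h)) ℝ)
    (ψ : ℕ → ℝ → ℝ)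
    (x : ℕ → Fin (L 0) → ℝ) (t : ℕ) : Fin (L H) → ℝ :=
  (w H).mulVec (hiddenState L w v ψ x t (H - 1))

lemma nnz_eq_card {m n : Type*} [Fintype m] [Fintype n] [DecidableEq m] [DecidableEq n]
    (A : Matrix m n ℝ) [DecidablePred fun p : m × n => A p.1 p.2 ≠ 0] :
    nnz A = (Finset.univ.filter fun p : m × n => A p.1 p.2 ≠ 0).card := by
  rw [nnz, Nat.card_eq_fintype_card, Fintype.card_subtype]

lemma l1_mulVec_le {m n : ℕ} (A : Matrix (Fin m) (Fin n) ℝ) (u : Fin n → ℝ)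
    (E M : ℝ) (hM : 0 ≤ M) (hE : 0 ≤ E)
    (hA : ∀ j k, |A j k| ≤ E) (hu : ∀ k, |u k| ≤ M) :
    ∑ j, |A.mulVec u j| ≤ (nnz A : ℝ) * E * M := by
  classical
  have h1 : ∑ j, |A.mulVec u j| ≤ ∑ j, ∑ k, |A j k| * |u k| := by
    apply Finset.sum_le_sum
    intro j _
    calc |A.mulVec u j| = |∑ k, A j k * u k| := by
          simp [Matrix.mulVec, dotProduct]
      _ ≤ ∑ k, |A j k * u k| := Finset.abs_sum_le_sum_abs _ _
      _ = ∑ k, |A j k| * |u k| := by simp [abs_mul]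
  have h2 : ∑ j, ∑ k, |A j k| * |u k|
      = ∑ p ∈ (Finset.univ : Finset (Fin m × Fin n)), |A p.1 p.2| * |u p.2| := by
    rw [← Finset.univ_product_univ, Finset.sum_product]
  have h3 : ∑ p ∈ (Finset.univ : Finset (Fin m × Fin n)), |A p.1 p.2| * |u p.2|
      = ∑ p ∈ Finset.univ.filter (fun p : Fin m × Fin n => A p.1 p.2 ≠ 0),
          |A p.1 p.2| * |u p.2| := by
    symm
    apply Finset.sum_filter_of_ne
    intro p _ hp h0
    simp [h0] at hp
  have h4 : ∑ p ∈ Finset.univ.filter (fun p : Fin m × Fin n => A p.1 p.2 ≠ 0),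
        |A p.1 p.2| * |u p.2| ≤
      (Finset.univ.filter (fun p : Fin m × Fin n => A p.1 p.2 ≠ 0)).card • (E * M) := by
    apply Finset.sum_le_card_nsmul
    intro p _
    exact mul_le_mul (hA _ _) (hu _) (abs_nonneg _) hE
  rw [nnz_eq_card, mul_assoc]
  calc ∑ j, |A.mulVec u j| ≤ _ := h1
    _ = _ := h2
    _ = _ := h3
    _ ≤ _ := h4
    _ = _ := by rw [nsmul_eq_mul]

lemma step_arith (a b E P Q : ℝ) (ha : 1 ≤ a) (hb : 1 ≤ b) (hE : 1 ≤ E)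
    (hP : 1 ≤ P) (hQ : 1 ≤ Q) (t i : ℕ) :
    a * E * (((t:ℝ)+1)^i * P * Q^t * E^((t+1)*i))
      + b * E * ((t:ℝ)^(i+1) * (P*a) * ((Q*b))^(t-1) * E^(t*(i+1)))
    ≤ ((t:ℝ)+1)^(i+1) * (P*a) * (Q*b)^t * E^((t+1)*(i+1)) := by
  have hE0 : (0:ℝ) ≤ E := by linarith
  have hQ0 : (0:ℝ) ≤ Q := by linarith
  have hP0 : (0:ℝ) ≤ P := by linarith
  have ha0 : (0:ℝ) ≤ a := by linarith
  have hb0 : (0:ℝ) ≤ b := by linarith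
  have hQb : Q ≤ Q*b := by nlinarith
  have hbQb : b ≤ Q*b := by nlinarith
  have hQb0 : (0:ℝ) ≤ Q*b := by positivity
  rcases Nat.eq_zero_or_pos t with rfl|htpos
  · push_cast
    simp [zero_pow (by omega : i + 1 ≠ 0)]
    apply le_of_eq
    rw [pow_succ]
    ring
  · obtain ⟨s, rfl⟩ : ∃ s, t = s + 1 := ⟨t-1, by omega⟩
    simp only [Nat.add_sub_cancel]
    push_cast
    have h1 : a * E * (((s:ℝ)+1+1)^i * P * Q^(s+1) * E^((s+1+1)*i))
        ≤ ((s:ℝ)+1+1)^i * (P*a) * (Q*b)^(s+1) * E^((s+1+1)*(i+1)) := by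
      calc a * E * (((s:ℝ)+1+1)^i * P * Q^(s+1) * E^((s+1+1)*i))
          = ((s:ℝ)+1+1)^i * (P*a) * Q^(s+1) * E^((s+1+1)*i+1) := by
            rw [pow_succ]; ring
        _ ≤ ((s:ℝ)+1+1)^i * (P*a) * (Q*b)^(s+1) * E^((s+1+1)*(i+1)) := by
            have hexp1 : (s+1+1)*i+1 ≤ (s+1+1)*(i+1) := by nlinarith
            gcongr
    have h2 : b * E * (((s:ℝ)+1)^(i+1) * (P*a) * (Q*b)^s * E^((s+1)*(i+1)))
        ≤ ((s:ℝ)+1)^(i+1) * (P*a) * (Q*b)^(s+1) * E^((s+1+1)*(i+1)) := by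
      calc b * E * (((s:ℝ)+1)^(i+1) * (P*a) * (Q*b)^s * E^((s+1)*(i+1)))
          = ((s:ℝ)+1)^(i+1) * (P*a) * (b*(Q*b)^s) * E^((s+1)*(i+1)+1) := by
            rw [pow_succ]; ring
        _ ≤ ((s:ℝ)+1)^(i+1) * (P*a) * ((Q*b)*(Q*b)^s) * E^((s+1+1)*(i+1)) := by
            have hexp2 : (s+1)*(i+1)+1 ≤ (s+1+1)*(i+1) := by nlinarith
            gcongr
        _ = ((s:ℝ)+1)^(i+1) * (P*a) * (Q*b)^(s+1) * E^((s+1+1)*(i+1)) := by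
            rw [← pow_succ']
    have h3 : ((s:ℝ)+1+1)^i + ((s:ℝ)+1)^(i+1) ≤ ((s:ℝ)+1+1)^(i+1) := by
      have hs0 : (0:ℝ) ≤ (s:ℝ) := by positivity
      have h4 : ((s:ℝ)+1)^(i+1) ≤ ((s:ℝ)+1) * ((s:ℝ)+1+1)^i := by
        rw [pow_succ']
        gcongr <;> linarith
      calc ((s:ℝ)+1+1)^i + ((s:ℝ)+1)^(i+1)
          ≤ ((s:ℝ)+1+1)^i + ((s:ℝ)+1) * ((s:ℝ)+1+1)^i := by linarith
        _ = ((s:ℝ)+1+1)^(i+1) := by rw [pow_succ']; ring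
    have hC : (0:ℝ) ≤ (P*a) * (Q*b)^(s+1) * E^((s+1+1)*(i+1)) := by positivity
    calc a * E * (((s:ℝ)+1+1)^i * P * Q^(s+1) * E^((s+1+1)*i))
          + b * E * (((s:ℝ)+1)^(i+1) * (P*a) * (Q*b)^s * E^((s+1)*(i+1)))
        ≤ ((s:ℝ)+1+1)^i * (P*a) * (Q*b)^(s+1) * E^((s+1+1)*(i+1))
          + ((s:ℝ)+1)^(i+1) * (P*a) * (Q*b)^(s+1) * E^((s+1+1)*(i+1)) := add_le_add h1 h2
      _ = (((s:ℝ)+1+1)^i + ((s:ℝ)+1)^(i+1)) * ((P*a) * (Q*b)^(s+1) * E^((s+1+1)*(i+1))) := by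
          ring
      _ ≤ ((s:ℝ)+1+1)^(i+1) * ((P*a) * (Q*b)^(s+1) * E^((s+1+1)*(i+1))) :=
          mul_le_mul_of_nonneg_right h3 hC
      _ = ((s:ℝ)+1+1)^(i+1) * (P*a) * (Q*b)^(s+1) * E^((s+1+1)*(i+1)) := by ring


set_option maxHeartbeats 1000000 in
/-- Lemma S (sparse RNN hidden-state ℓ¹ bound): for every time `t ≥ 1` and hidden layer
`1 ≤ i ≤ H-1`,
`∑_j |z_t^i(j)| ≤ t^i (∏_{k=1}^i r_{w_k}) (∏_{k=1}^i r_{v_k})^{t-1} E^{t i}`. -/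
theorem hiddenState_l1_bound
    (H : ℕ) (hH : 2 ≤ H)
    (L : ℕ → ℕ) (hL : ∀ h ≤ H, 1 ≤ L h)
    (w : (h : ℕ) → Matrix (Fin (L h)) (Fin (L (h - 1))) ℝ)
    (v : (h : ℕ) → Matrix (Fin (L h)) (Fin (L h)) ℝ)
    (ψ : ℕ → ℝ → ℝ)
    (hψ : ∀ h, 1 ≤ h → h ≤ H - 1 → LipschitzWith 1 (ψ h) ∧ ψ h 0 = 0)
    (x : ℕ → Fin (L 0) → ℝ) (hx : ∀ s j, |x s j| ≤ 1)
    (E : ℝ) (hE : 1 ≤ E)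
    (hwE : ∀ h, 1 ≤ h → h ≤ H → ∀ j k, |w h j k| ≤ E)
    (hvE : ∀ h, 1 ≤ h → h ≤ H - 1 → ∀ j k, |v h j k| ≤ E)
    (hwr : ∀ h, 1 ≤ h → h ≤ H → 1 ≤ nnz (w h))
    (hvr : ∀ h, 1 ≤ h → h ≤ H - 1 → 1 ≤ nnz (v h))
    (t : ℕ) (ht : 1 ≤ t) (i : ℕ) (hi1 : 1 ≤ i) (hi2 : i ≤ H - 1) :
    ∑ j, |hiddenState L w v ψ x t i j| ≤
      (t : ℝ) ^ i * (∏ k ∈ Finset.Icc 1 i, (nnz (w k) : ℝ))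
        * (∏ k ∈ Finset.Icc 1 i, (nnz (v k) : ℝ)) ^ (t - 1) * E ^ (t * i) := by
  classical
  have hE0 : (0:ℝ) ≤ E := le_trans zero_le_one hE
  set Pw : ℕ → ℝ := fun i => ∏ k ∈ Finset.Icc 1 i, (nnz (w k) : ℝ) with hPw
  set Pv : ℕ → ℝ := fun i => ∏ k ∈ Finset.Icc 1 i, (nnz (v k) : ℝ) with hPv
  have hPw1 : ∀ i, i ≤ H → 1 ≤ Pw i := by
    intro i hi
    show (1:ℝ) ≤ ∏ k ∈ Finset.Icc 1 i, (nnz (w k) : ℝ)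
    have h : 1 ≤ ∏ k ∈ Finset.Icc 1 i, nnz (w k) := by
      apply Finset.one_le_prod'
      intro k hk
      rw [Finset.mem_Icc] at hk
      exact hwr k hk.1 (le_trans hk.2 hi)
    calc (1:ℝ) ≤ ((∏ k ∈ Finset.Icc 1 i, nnz (w k) : ℕ) : ℝ) := by exact_mod_cast h
      _ = _ := by push_cast; rfl
  have hPv1 : ∀ i, i ≤ H - 1 → 1 ≤ Pv i := by
    intro i hi
    show (1:ℝ) ≤ ∏ k ∈ Finset.Icc 1 i, (nnz (v k) : ℝ)
    have h : 1 ≤ ∏ k ∈ Finset.Icc 1 i, nnz (v k) := by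
      apply Finset.one_le_prod'
      intro k hk
      rw [Finset.mem_Icc] at hk
      exact hvr k hk.1 (le_trans hk.2 hi)
    calc (1:ℝ) ≤ ((∏ k ∈ Finset.Icc 1 i, nnz (v k) : ℕ) : ℝ) := by exact_mod_cast h
      _ = _ := by push_cast; rfl
  have habs : ∀ h, 1 ≤ h → h ≤ H - 1 → ∀ y : ℝ, |ψ h y| ≤ |y| := by
    intro h h1 h2 y
    obtain ⟨hlip, hzero⟩ := hψ h h1 h2
    have := hlip.dist_le_mul y 0
    simpa [hzero, Real.dist_eq] using this
  have key : ∀ t i, 1 ≤ i → i ≤ H - 1 →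
      ∑ j, |hiddenState L w v ψ x t i j| ≤
        (t : ℝ) ^ i * Pw i * Pv i ^ (t - 1) * E ^ (t * i) := by
    intro t
    induction t with
    | zero =>
      intro i hi1 hi2
      simp [hiddenState, zero_pow (by omega : i ≠ 0)]
    | succ t IH =>
      intro i
      induction i with
      | zero => omega
      | succ i IHi =>
        intro _ hi2
        have hrec : ∀ j, hiddenState L w v ψ x (t+1) (i+1) j =
            ψ (i+1) ((w (i+1)).mulVec (hiddenState L w v ψ x (t+1) i) j
              + (v (i+1)).mulVec (hiddenState L w v ψ x t (i+1)) j) := by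
          intro j; rfl
        have hPwi : 1 ≤ Pw i := hPw1 i (by omega)
        have hPvi : 1 ≤ Pv i := hPv1 i (by omega)
        have ha1 : (1:ℝ) ≤ (nnz (w (i+1)) : ℝ) := by
          exact_mod_cast hwr (i+1) (by omega) (by omega)
        have hb1 : (1:ℝ) ≤ (nnz (v (i+1)) : ℝ) := by
          exact_mod_cast hvr (i+1) (by omega) hi2
        have hPwsucc : Pw (i+1) = Pw i * (nnz (w (i+1)) : ℝ) := by
          simp only [hPw]
          rw [Finset.prod_Icc_succ_top (by omega : 1 ≤ i + 1)]
        have hPvsucc : Pv (i+1) = Pv i * (nnz (v (i+1)) : ℝ) := by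
          simp only [hPv]
          rw [Finset.prod_Icc_succ_top (by omega : 1 ≤ i + 1)]
        -- bound on current-time layer-i entries
        have hcur : ∀ k, |hiddenState L w v ψ x (t+1) i k| ≤
            ((t:ℝ)+1) ^ i * Pw i * Pv i ^ t * E ^ ((t+1) * i) := by
          rcases Nat.eq_zero_or_pos i with hi0 | hipos
          · subst hi0
            intro k
            have h1 : ((t:ℝ)+1) ^ 0 * Pw 0 * Pv 0 ^ t * E ^ ((t+1) * 0) = 1 := by
              simp [hPw, hPv]
            rw [h1]
            exact hx (t+1) k
          · intro k
            have hIH := IHi hipos (by omega)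
            calc |hiddenState L w v ψ x (t+1) i k|
                ≤ ∑ j, |hiddenState L w v ψ x (t+1) i j| :=
                  Finset.single_le_sum (f := fun j => |hiddenState L w v ψ x (t+1) i j|)
                    (fun j _ => abs_nonneg _) (Finset.mem_univ k)
              _ ≤ ((t+1:ℕ) : ℝ) ^ i * Pw i * Pv i ^ (t+1-1) * E ^ ((t+1) * i) := hIH
              _ = ((t:ℝ)+1) ^ i * Pw i * Pv i ^ t * E ^ ((t+1) * i) := by
                  push_cast [Nat.add_sub_cancel]
                  ring
        have hMnn : (0:ℝ) ≤ ((t:ℝ)+1) ^ i * Pw i * Pv i ^ t * E ^ ((t+1) * i) :=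
          mul_nonneg (mul_nonneg (mul_nonneg (by positivity) (by linarith))
            (pow_nonneg (by linarith) _)) (by positivity)
        have hwpart : ∑ j, |(w (i+1)).mulVec (hiddenState L w v ψ x (t+1) i) j| ≤
            (nnz (w (i+1)) : ℝ) * E *
              (((t:ℝ)+1) ^ i * Pw i * Pv i ^ t * E ^ ((t+1) * i)) :=
          l1_mulVec_le _ _ E _ hMnn hE0 (hwE (i+1) (by omega) (by omega)) hcur
        -- bound on previous-time layer-(i+1) entries
        have hFt0 : (0:ℝ) ≤ (t : ℝ) ^ (i+1) * (Pw i * (nnz (w (i+1)) : ℝ))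
            * (Pv i * (nnz (v (i+1)) : ℝ)) ^ (t - 1) * E ^ (t * (i+1)) := by
          have h1 : (0:ℝ) ≤ Pw i := by linarith
          have h2 : (0:ℝ) ≤ Pv i := by linarith
          have h3 : (0:ℝ) ≤ (nnz (w (i+1)) : ℝ) := by linarith
          have h4 : (0:ℝ) ≤ (nnz (v (i+1)) : ℝ) := by linarith
          positivity
        have hprev : ∀ k, |hiddenState L w v ψ x t (i+1) k| ≤
            (t : ℝ) ^ (i+1) * (Pw i * (nnz (w (i+1)) : ℝ))
              * (Pv i * (nnz (v (i+1)) : ℝ)) ^ (t - 1) * E ^ (t * (i+1)) := by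
          intro k
          have hIH := IH (i+1) (by omega) hi2
          rw [hPwsucc, hPvsucc] at hIH
          calc |hiddenState L w v ψ x t (i+1) k|
              ≤ ∑ j, |hiddenState L w v ψ x t (i+1) j| :=
                Finset.single_le_sum (f := fun j => |hiddenState L w v ψ x t (i+1) j|)
                  (fun j _ => abs_nonneg _) (Finset.mem_univ k)
            _ ≤ _ := hIH
        have hvpart : ∑ j, |(v (i+1)).mulVec (hiddenState L w v ψ x t (i+1)) j| ≤
            (nnz (v (i+1)) : ℝ) * E *
              ((t : ℝ) ^ (i+1) * (Pw i * (nnz (w (i+1)) : ℝ))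
                * (Pv i * (nnz (v (i+1)) : ℝ)) ^ (t - 1) * E ^ (t * (i+1))) :=
          l1_mulVec_le _ _ E _ hFt0 hE0 (hvE (i+1) (by omega) hi2) hprev
        have hsplit : ∑ j, |hiddenState L w v ψ x (t+1) (i+1) j| ≤
            (∑ j, |(w (i+1)).mulVec (hiddenState L w v ψ x (t+1) i) j|)
            + ∑ j, |(v (i+1)).mulVec (hiddenState L w v ψ x t (i+1)) j| := by
          rw [← Finset.sum_add_distrib]
          apply Finset.sum_le_sum
          intro j _
          rw [hrec j]
          exact le_trans (habs (i+1) (by omega) hi2 _) (abs_add_le _ _)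
        calc ∑ j, |hiddenState L w v ψ x (t+1) (i+1) j|
            ≤ (nnz (w (i+1)) : ℝ) * E *
                (((t:ℝ)+1) ^ i * Pw i * Pv i ^ t * E ^ ((t+1) * i))
              + (nnz (v (i+1)) : ℝ) * E *
                ((t : ℝ) ^ (i+1) * (Pw i * (nnz (w (i+1)) : ℝ))
                  * (Pv i * (nnz (v (i+1)) : ℝ)) ^ (t - 1) * E ^ (t * (i+1))) :=
              le_trans hsplit (add_le_add hwpart hvpart)
          _ ≤ ((t:ℝ)+1) ^ (i+1) * (Pw i * (nnz (w (i+1)) : ℝ))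
                * (Pv i * (nnz (v (i+1)) : ℝ)) ^ t * E ^ ((t+1) * (i+1)) :=
              step_arith _ _ E (Pw i) (Pv i) ha1 hb1 hE hPwi hPvi t i
          _ = ((t+1:ℕ) : ℝ) ^ (i+1) * Pw (i+1) * Pv (i+1) ^ (t+1-1) * E ^ ((t+1) * (i+1)) := by
              rw [hPwsucc, hPvsucc]
              push_cast [Nat.add_sub_cancel]
              ring
  exact key t i hi1 hi2
end

section
/- For every time index t ≥ 1, the ℓ1-norm of the network output satisfies Σ_{j=1}^{L_H} |O_t(j)| ≤ t^H · (Π_{k=1}^{H} r_{w_k}) · (Π_{k=1}^{H−1} r_{v_k})^{t−1} · E^{t(H−1)+1}. -/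
open Finset

lemma sum_abs_mulVec_le {m n : Type*} [Fintype m] [Fintype n] (A : Matrix m n ℝ)
    (z : n → ℝ) (E M : ℝ) (hE : 0 ≤ E)
    (hA : ∀ i j, |A i j| ≤ E) (hz : ∀ j, |z j| ≤ M) :
    ∑ i, |A.mulVec z i| ≤ (nnz A : ℝ) * E * M := by
  classical
  have h1 : ∑ i, |A.mulVec z i| ≤ ∑ i, ∑ j, |A i j * z j| :=
    Finset.sum_le_sum fun i _ => Finset.abs_sum_le_sum_abs _ _
  set s := Finset.univ.filter (fun p : m × n => A p.1 p.2 ≠ 0) with hs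
  have h2 : ∑ i, ∑ j, |A i j * z j| = ∑ p ∈ s, |A p.1 p.2 * z p.2| := by
    rw [← Finset.sum_product']
    refine (Finset.sum_subset (Finset.filter_subset _ _) ?_).symm
    intro p _ hp
    have h0 : A p.1 p.2 = 0 := by
      by_contra hne
      exact hp (Finset.mem_filter.mpr ⟨Finset.mem_univ _, hne⟩)
    simp [h0]
  have h3 : ∑ p ∈ s, |A p.1 p.2 * z p.2| ≤ s.card • (E * M) :=
    Finset.sum_le_card_nsmul s _ (E * M) fun p _ => by
      rw [abs_mul]; exact mul_le_mul (hA _ _) (hz _) (abs_nonneg _) hE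
  have h4 : (s.card : ℝ) = (nnz A : ℝ) := by
    congr 1
    simp [nnz, Nat.card_eq_fintype_card, Fintype.card_subtype, hs]
  rw [nsmul_eq_mul, h4] at h3
  calc ∑ i, |A.mulVec z i| ≤ _ := h1
    _ = _ := h2
    _ ≤ (nnz A : ℝ) * (E * M) := h3
    _ = _ := by ring

lemma abs_mulVec_le {m n : Type*} [Fintype m] [Fintype n] (A : Matrix m n ℝ)
    (z : n → ℝ) (E M : ℝ) (hE : 0 ≤ E)
    (hA : ∀ i j, |A i j| ≤ E) (hz : ∀ j, |z j| ≤ M) (i : m) :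
    |A.mulVec z i| ≤ (nnz A : ℝ) * E * M :=
  le_trans (Finset.single_le_sum (f := fun i => |A.mulVec z i|) (fun _ _ => abs_nonneg _)
    (Finset.mem_univ i)) (sum_abs_mulVec_le A z E M hE hA hz)

lemma prodcast_nonneg (r : ℕ → ℕ) (s : Finset ℕ) : (0:ℝ) ≤ ∏ k ∈ s, (r k : ℝ) :=
  Finset.prod_nonneg fun k _ => Nat.cast_nonneg _

lemma sum_pow_le (t h : ℕ) : ((t:ℝ)+1)^h + (t:ℝ)^(h+1) ≤ ((t:ℝ)+1)^(h+1) := by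
  have h1 : (t:ℝ)^(h+1) ≤ (t:ℝ) * ((t:ℝ)+1)^h := by
    rw [pow_succ']
    exact mul_le_mul_of_nonneg_left
      (pow_le_pow_left₀ (by positivity) (by linarith) h) (by positivity)
  have h2 : ((t:ℝ)+1)^(h+1) = ((t:ℝ)+1)^h + (t:ℝ) * ((t:ℝ)+1)^h := by ring
  linarith

lemma term1_le (t h : ℕ) (r1 s1 Ww Vv E : ℝ)
    (hr1 : 1 ≤ r1) (hs1 : 1 ≤ s1) (hWw : 1 ≤ Ww) (hVv : 1 ≤ Vv) (hE : 1 ≤ E) :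
    r1 * E * (((t:ℝ)+1)^h * Ww * Vv^t * E^((t+1)*h)) ≤
      ((t:ℝ)+1)^h * (Ww * r1) * (Vv*s1)^t * E^((t+1)*(h+1)) := by
  have hE0 : (0:ℝ) ≤ E := by linarith
  have hVv0 : (0:ℝ) ≤ Vv := by linarith
  have k1 : Vv^t ≤ (Vv*s1)^t :=
    pow_le_pow_left₀ hVv0 (le_mul_of_one_le_right hVv0 hs1) t
  have k2 : E^((t+1)*h) * E ≤ E^((t+1)*(h+1)) := by
    rw [← pow_succ]
    exact pow_le_pow_right₀ hE (by nlinarith)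
  have hpre : (0:ℝ) ≤ ((t:ℝ)+1)^h * (Ww * r1) := by positivity
  calc r1 * E * (((t:ℝ)+1)^h * Ww * Vv^t * E^((t+1)*h))
      = (((t:ℝ)+1)^h * (Ww * r1)) * (Vv^t * (E^((t+1)*h) * E)) := by ring
    _ ≤ (((t:ℝ)+1)^h * (Ww * r1)) * ((Vv*s1)^t * E^((t+1)*(h+1))) := by
        refine mul_le_mul_of_nonneg_left
          (mul_le_mul k1 k2 (by positivity) (by positivity)) hpre
    _ = _ := by ring

lemma term2_le (t h : ℕ) (s1 Wr Vr E : ℝ)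
    (hs1 : 1 ≤ s1) (hsV : s1 ≤ Vr) (hWr : 0 ≤ Wr) (hVr : 1 ≤ Vr) (hE : 1 ≤ E) :
    s1 * E * ((t:ℝ)^(h+1) * Wr * Vr^(t-1) * E^(t*(h+1))) ≤
      (t:ℝ)^(h+1) * Wr * Vr^t * E^((t+1)*(h+1)) := by
  have hE0 : (0:ℝ) ≤ E := by linarith
  have hVr0 : (0:ℝ) ≤ Vr := by linarith
  cases t with
  | zero => simp [zero_pow (Nat.succ_ne_zero h)]
  | succ u =>
    have k1 : Vr^(u+1-1) * s1 ≤ Vr^(u+1) := by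
      rw [Nat.add_sub_cancel, pow_succ]
      exact mul_le_mul_of_nonneg_left hsV (by positivity)
    have k2 : E^((u+1)*(h+1)) * E ≤ E^((u+2)*(h+1)) := by
      rw [← pow_succ]
      exact pow_le_pow_right₀ hE (by nlinarith)
    have hpre : (0:ℝ) ≤ ((u+1:ℕ):ℝ)^(h+1) * Wr := by positivity
    calc s1 * E * (((u+1:ℕ):ℝ)^(h+1) * Wr * Vr^(u+1-1) * E^((u+1)*(h+1)))
        = (((u+1:ℕ):ℝ)^(h+1) * Wr) * ((Vr^(u+1-1) * s1) * (E^((u+1)*(h+1)) * E)) := by ring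
      _ ≤ (((u+1:ℕ):ℝ)^(h+1) * Wr) * (Vr^(u+1) * E^((u+2)*(h+1))) := by
          refine mul_le_mul_of_nonneg_left
            (mul_le_mul k1 k2 (by positivity) (by positivity)) hpre
      _ = ((u+1:ℕ):ℝ)^(h+1) * Wr * Vr^(u+1) * E^((u+1+1)*(h+1)) := by ring_nf

lemma sum_step (t h : ℕ) (Wr Vr E : ℝ) (hWr : 0 ≤ Wr) (hVr : 0 ≤ Vr) (hE : 0 ≤ E) :
    ((t:ℝ)+1)^h * Wr * Vr^t * E^((t+1)*(h+1)) + (t:ℝ)^(h+1) * Wr * Vr^t * E^((t+1)*(h+1))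
      ≤ ((t:ℝ)+1)^(h+1) * Wr * Vr^t * E^((t+1)*(h+1)) := by
  have hC : (0:ℝ) ≤ Wr * Vr^t * E^((t+1)*(h+1)) := by positivity
  have := mul_le_mul_of_nonneg_right (sum_pow_le t h) hC
  calc ((t:ℝ)+1)^h * Wr * Vr^t * E^((t+1)*(h+1)) + (t:ℝ)^(h+1) * Wr * Vr^t * E^((t+1)*(h+1))
      = (((t:ℝ)+1)^h + (t:ℝ)^(h+1)) * (Wr * Vr^t * E^((t+1)*(h+1))) := by ring
    _ ≤ ((t:ℝ)+1)^(h+1) * (Wr * Vr^t * E^((t+1)*(h+1))) := this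
    _ = _ := by ring

/-- Lemma S (sparse RNN output ℓ¹ bound): for every time `t ≥ 1`,
`∑_j |O_t(j)| ≤ t^H (∏_{k=1}^H r_{w_k}) (∏_{k=1}^{H-1} r_{v_k})^{t-1} E^{t(H-1)+1}`. -/
theorem output_l1_bound
    (H : ℕ) (hH : 2 ≤ H)
    (L : ℕ → ℕ) (hL : ∀ h ≤ H, 1 ≤ L h)
    (w : (h : ℕ) → Matrix (Fin (L h)) (Fin (L (h - 1))) ℝ)
    (v : (h : ℕ) → Matrix (Fin (L h)) (Fin (L h)) ℝ)
    (ψ : ℕ → ℝ → ℝ)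
    (hψ : ∀ h, 1 ≤ h → h ≤ H - 1 → LipschitzWith 1 (ψ h) ∧ ψ h 0 = 0)
    (x : ℕ → Fin (L 0) → ℝ) (hx : ∀ s j, |x s j| ≤ 1)
    (E : ℝ) (hE : 1 ≤ E)
    (hwE : ∀ h, 1 ≤ h → h ≤ H → ∀ j k, |w h j k| ≤ E)
    (hvE : ∀ h, 1 ≤ h → h ≤ H - 1 → ∀ j k, |v h j k| ≤ E)
    (hwr : ∀ h, 1 ≤ h → h ≤ H → 1 ≤ nnz (w h))
    (hvr : ∀ h, 1 ≤ h → h ≤ H - 1 → 1 ≤ nnz (v h))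
    (t : ℕ) (ht : 1 ≤ t) :
    ∑ j, |output L H w v ψ x t j| ≤
      (t : ℝ) ^ H * (∏ k ∈ Finset.Icc 1 H, (nnz (w k) : ℝ))
        * (∏ k ∈ Finset.Icc 1 (H - 1), (nnz (v k) : ℝ)) ^ (t - 1)
        * E ^ (t * (H - 1) + 1) := by
  have hE0 : (0:ℝ) ≤ E := le_trans zero_le_one hE
  have hpsi : ∀ h, 1 ≤ h → h ≤ H - 1 → ∀ y : ℝ, |ψ h y| ≤ |y| := by
    intro h h1 h2 y
    have := (hψ h h1 h2).1.dist_le_mul y 0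
    simpa [Real.dist_eq, (hψ h h1 h2).2] using this
  have hPw1 : ∀ h ≤ H, (1:ℝ) ≤ ∏ k ∈ Finset.Icc 1 h, (nnz (w k):ℝ) := by
    intro h hh
    calc (1:ℝ) = ∏ _k ∈ Finset.Icc 1 h, (1:ℝ) := (Finset.prod_const_one).symm
      _ ≤ _ := Finset.prod_le_prod (fun _ _ => zero_le_one) (fun k hk => by
          rw [Finset.mem_Icc] at hk
          exact_mod_cast hwr k hk.1 (le_trans hk.2 hh))
  have hPv1 : ∀ h ≤ H - 1, (1:ℝ) ≤ ∏ k ∈ Finset.Icc 1 h, (nnz (v k):ℝ) := by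
    intro h hh
    calc (1:ℝ) = ∏ _k ∈ Finset.Icc 1 h, (1:ℝ) := (Finset.prod_const_one).symm
      _ ≤ _ := Finset.prod_le_prod (fun _ _ => zero_le_one) (fun k hk => by
          rw [Finset.mem_Icc] at hk
          exact_mod_cast hvr k hk.1 (le_trans hk.2 hh))
  have key : ∀ t : ℕ, ∀ h : ℕ, h ≤ H - 1 → ∀ j : Fin (L h),
      |hiddenState L w v ψ x t h j| ≤
        (t:ℝ)^h * (∏ k ∈ Finset.Icc 1 h, (nnz (w k):ℝ))
          * (∏ k ∈ Finset.Icc 1 h, (nnz (v k):ℝ))^(t-1) * E^(t*h) := by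
    intro t
    induction t with
    | zero =>
      intro h hh j
      have hz : hiddenState L w v ψ x 0 h j = 0 := rfl
      rw [hz, abs_zero]
      refine mul_nonneg (mul_nonneg (mul_nonneg (by positivity) (prodcast_nonneg _ _))
        (pow_nonneg (prodcast_nonneg _ _) _)) (pow_nonneg hE0 _)
    | succ t ih =>
      intro h
      induction h with
      | zero =>
        intro _ j
        have hz : hiddenState L w v ψ x (t+1) 0 j = x (t+1) j := rfl
        have he : Finset.Icc 1 0 = (∅ : Finset ℕ) := Finset.Icc_eq_empty (by omega)
        rw [hz, he]
        simpa using hx (t+1) j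
      | succ h ihh =>
        intro hh j
        have hh' : h ≤ H - 1 := le_trans (Nat.le_succ h) hh
        have hhH : h + 1 ≤ H := le_trans hh (Nat.sub_le H 1)
        have hr1 : (1:ℝ) ≤ (nnz (w (h+1)):ℝ) := by
          exact_mod_cast hwr (h+1) (by omega) hhH
        have hs1 : (1:ℝ) ≤ (nnz (v (h+1)):ℝ) := by
          exact_mod_cast hvr (h+1) (by omega) hh
        have hWw : (1:ℝ) ≤ ∏ k ∈ Finset.Icc 1 h, (nnz (w k):ℝ) := hPw1 h (by omega)
        have hVv : (1:ℝ) ≤ ∏ k ∈ Finset.Icc 1 h, (nnz (v k):ℝ) := hPv1 h hh'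
        have hPwS : ∏ k ∈ Finset.Icc 1 (h+1), (nnz (w k):ℝ)
            = (∏ k ∈ Finset.Icc 1 h, (nnz (w k):ℝ)) * (nnz (w (h+1)):ℝ) :=
          Finset.prod_Icc_succ_top (by omega) _
        have hPvS : ∏ k ∈ Finset.Icc 1 (h+1), (nnz (v k):ℝ)
            = (∏ k ∈ Finset.Icc 1 h, (nnz (v k):ℝ)) * (nnz (v (h+1)):ℝ) :=
          Finset.prod_Icc_succ_top (by omega) _
        have hWr1 : (1:ℝ) ≤ ∏ k ∈ Finset.Icc 1 (h+1), (nnz (w k):ℝ) := hPw1 (h+1) hhH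
        have hVr1 : (1:ℝ) ≤ ∏ k ∈ Finset.Icc 1 (h+1), (nnz (v k):ℝ) := hPv1 (h+1) hh
        have hsV : (nnz (v (h+1)):ℝ) ≤ ∏ k ∈ Finset.Icc 1 (h+1), (nnz (v k):ℝ) := by
          rw [hPvS]
          exact le_mul_of_one_le_left (by positivity) hVv
        -- bound on current layer below, current time
        have hb1 : ∀ k : Fin (L h), |hiddenState L w v ψ x (t+1) h k| ≤
            ((t:ℝ)+1)^h * (∏ k ∈ Finset.Icc 1 h, (nnz (w k):ℝ))
              * (∏ k ∈ Finset.Icc 1 h, (nnz (v k):ℝ))^t * E^((t+1)*h) := by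
          intro k
          have := ihh hh' k
          push_cast at this
          simpa [Nat.add_sub_cancel] using this
        -- bound on same layer, previous time
        have hb2 := ih (h+1) hh
        -- mulVec bounds
        have hA : |(w (h+1)).mulVec (hiddenState L w v ψ x (t+1) h) j| ≤
            (nnz (w (h+1)):ℝ) * E *
              (((t:ℝ)+1)^h * (∏ k ∈ Finset.Icc 1 h, (nnz (w k):ℝ))
                * (∏ k ∈ Finset.Icc 1 h, (nnz (v k):ℝ))^t * E^((t+1)*h)) :=
          abs_mulVec_le _ _ E _ hE0 (hwE (h+1) (by omega) hhH) hb1 j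
        have hB : |(v (h+1)).mulVec (hiddenState L w v ψ x t (h+1)) j| ≤
            (nnz (v (h+1)):ℝ) * E *
              ((t:ℝ)^(h+1) * (∏ k ∈ Finset.Icc 1 (h+1), (nnz (w k):ℝ))
                * (∏ k ∈ Finset.Icc 1 (h+1), (nnz (v k):ℝ))^(t-1) * E^(t*(h+1))) :=
          abs_mulVec_le _ _ E _ hE0 (hvE (h+1) (by omega) hh) hb2 j
        have step1 : |hiddenState L w v ψ x (t+1) (h+1) j| ≤
            |(w (h+1)).mulVec (hiddenState L w v ψ x (t+1) h) j|
              + |(v (h+1)).mulVec (hiddenState L w v ψ x t (h+1)) j| := by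
          have hz : hiddenState L w v ψ x (t+1) (h+1) j =
              ψ (h+1) ((w (h+1)).mulVec (hiddenState L w v ψ x (t+1) h) j
                + (v (h+1)).mulVec (hiddenState L w v ψ x t (h+1)) j) := rfl
          rw [hz]
          exact le_trans (hpsi (h+1) (by omega) hh _) (abs_add_le _ _)
        have ht1 := term1_le t h (nnz (w (h+1)):ℝ) (nnz (v (h+1)):ℝ)
          (∏ k ∈ Finset.Icc 1 h, (nnz (w k):ℝ)) (∏ k ∈ Finset.Icc 1 h, (nnz (v k):ℝ))
          E hr1 hs1 hWw hVv hE
        rw [← hPwS, ← hPvS] at ht1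
        have ht2 := term2_le t h (nnz (v (h+1)):ℝ)
          (∏ k ∈ Finset.Icc 1 (h+1), (nnz (w k):ℝ))
          (∏ k ∈ Finset.Icc 1 (h+1), (nnz (v k):ℝ)) E hs1 hsV (by linarith) hVr1 hE
        have hfin := sum_step t h (∏ k ∈ Finset.Icc 1 (h+1), (nnz (w k):ℝ))
          (∏ k ∈ Finset.Icc 1 (h+1), (nnz (v k):ℝ)) E (by linarith) (by linarith) hE0
        have hgoal : ((t+1:ℕ):ℝ)^(h+1) * (∏ k ∈ Finset.Icc 1 (h+1), (nnz (w k):ℝ))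
            * (∏ k ∈ Finset.Icc 1 (h+1), (nnz (v k):ℝ))^((t+1)-1) * E^((t+1)*(h+1))
            = ((t:ℝ)+1)^(h+1) * (∏ k ∈ Finset.Icc 1 (h+1), (nnz (w k):ℝ))
            * (∏ k ∈ Finset.Icc 1 (h+1), (nnz (v k):ℝ))^t * E^((t+1)*(h+1)) := by
          push_cast [Nat.add_sub_cancel]
          ring
        rw [hgoal]
        linarith [step1, hA, hB, ht1, ht2, hfin]
  -- final step
  have hH1 : H - 1 + 1 = H := by omega
  have hkey := key t (H-1) le_rfl
  have hsum := sum_abs_mulVec_le (w H) (hiddenState L w v ψ x t (H-1)) E _ hE0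
    (hwE H (by omega) le_rfl) hkey
  have hPwH : (∏ k ∈ Finset.Icc 1 H, (nnz (w k):ℝ))
      = (∏ k ∈ Finset.Icc 1 (H-1), (nnz (w k):ℝ)) * (nnz (w H):ℝ) := by
    conv_lhs => rw [← hH1, Finset.prod_Icc_succ_top (by omega), hH1]
  have houtput : ∀ j, output L H w v ψ x t j = (w H).mulVec (hiddenState L w v ψ x t (H-1)) j :=
    fun j => rfl
  have htpow : (t:ℝ)^(H-1) ≤ (t:ℝ)^H := by
    refine pow_le_pow_right₀ ?_ (Nat.sub_le H 1)
    exact_mod_cast ht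
  calc ∑ j, |output L H w v ψ x t j|
      = ∑ j, |(w H).mulVec (hiddenState L w v ψ x t (H-1)) j| := by
        simp only [houtput]
    _ ≤ (nnz (w H):ℝ) * E * ((t:ℝ)^(H-1) * (∏ k ∈ Finset.Icc 1 (H-1), (nnz (w k):ℝ))
          * (∏ k ∈ Finset.Icc 1 (H-1), (nnz (v k):ℝ))^(t-1) * E^(t*(H-1))) := hsum
    _ = (t:ℝ)^(H-1) * (∏ k ∈ Finset.Icc 1 H, (nnz (w k):ℝ))
          * (∏ k ∈ Finset.Icc 1 (H-1), (nnz (v k):ℝ))^(t-1) * E^(t*(H-1)+1) := by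
        rw [hPwH, pow_succ]
        ring
    _ ≤ (t:ℝ)^H * (∏ k ∈ Finset.Icc 1 H, (nnz (w k):ℝ))
          * (∏ k ∈ Finset.Icc 1 (H-1), (nnz (v k):ℝ))^(t-1) * E^(t*(H-1)+1) := by
        refine mul_le_mul_of_nonneg_right (mul_le_mul_of_nonneg_right
          (mul_le_mul_of_nonneg_right htpow (prodcast_nonneg _ _))
          (pow_nonneg (prodcast_nonneg _ _) _)) (pow_nonneg hE0 _)
end

section
/- Let β be a sparse RNN parameter with nnz(w^h(β)) = r_{w_h} ≥ 1 (h = 1,…,H), nnz(v^h(β)) = r_{v_h} ≥ 1 (h = 1,…,H−1), and all entries bounded in absolute value by E ≥ 1; let γ denote the set of indices of nonzero entries of β. Let β̌ be an RNN parameter whose entries vanish at every index outside γ and satisfy |β_j − β̌_j| ≤ δ₁ for every j ∈ γ, where δ₁ ≥ 0. Then for every t ≥ 1, Σ_{j=1}^{L_H} |O_t(β)(j) − O_t(β̌)(j)| ≤ t^H · H · δ₁ · (Π_{k=1}^{H} r_{w_k}) · (Π_{k=1}^{H−1} r_{v_k})^{t−1} · (E+δ₁)^{(H+1)t−2}. 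-/
open Finset

lemma sum_abs_mulVec_le_s3 {m n : ℕ} (A B : Matrix (Fin m) (Fin n) ℝ)
    (hsupp : ∀ j k, B j k = 0 → A j k = 0) (F M : ℝ) (hF : 0 ≤ F) (hM : 0 ≤ M)
    (hA : ∀ j k, |A j k| ≤ F) (u : Fin n → ℝ) (hu : ∀ k, |u k| ≤ M) :
    ∑ j, |A.mulVec u j| ≤ (nnz B : ℝ) * F * M := by
  classical
  have hcard : (nnz B : ℝ) = ((Finset.univ.filter (fun p : Fin m × Fin n => B p.1 p.2 ≠ 0)).card : ℝ) := by
    rw [nnz, Nat.card_eq_fintype_card, Fintype.card_subtype]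
  calc ∑ j, |A.mulVec u j| ≤ ∑ j, ∑ k, |A j k| * |u k| := by
        refine Finset.sum_le_sum fun j _ => ?_
        rw [Matrix.mulVec, dotProduct]
        exact (Finset.abs_sum_le_sum_abs _ _).trans (le_of_eq (by simp [abs_mul]))
    _ = ∑ p : Fin m × Fin n, |A p.1 p.2| * |u p.2| := (Fintype.sum_prod_type (f := fun p : Fin m × Fin n => |A p.1 p.2| * |u p.2|)).symm
    _ = ∑ p ∈ Finset.univ.filter (fun p : Fin m × Fin n => B p.1 p.2 ≠ 0),
          |A p.1 p.2| * |u p.2| := by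
        refine (Finset.sum_filter_of_ne ?_).symm
        intro p _ hp hB
        exact hp (by simp [hsupp p.1 p.2 hB])
    _ ≤ ∑ p ∈ Finset.univ.filter (fun p : Fin m × Fin n => B p.1 p.2 ≠ 0), F * M :=
        Finset.sum_le_sum fun p _ => mul_le_mul (hA _ _) (hu _) (abs_nonneg _) hF
    _ = ((Finset.univ.filter (fun p : Fin m × Fin n => B p.1 p.2 ≠ 0)).card : ℝ) * (F * M) := by
        rw [Finset.sum_const, nsmul_eq_mul]
    _ ≤ (nnz B : ℝ) * F * M := by rw [hcard]; ring_nf; exact le_refl _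

lemma abs_mulVec_le_s3 {m n : ℕ} (A B : Matrix (Fin m) (Fin n) ℝ)
    (hsupp : ∀ j k, B j k = 0 → A j k = 0) (F M : ℝ) (hF : 0 ≤ F) (hM : 0 ≤ M)
    (hA : ∀ j k, |A j k| ≤ F) (u : Fin n → ℝ) (hu : ∀ k, |u k| ≤ M) (j : Fin m) :
    |A.mulVec u j| ≤ (nnz B : ℝ) * F * M :=
  le_trans (Finset.single_le_sum (f := fun i => |A.mulVec u i|) (fun i _ => abs_nonneg _) (Finset.mem_univ j))
    (sum_abs_mulVec_le_s3 A B hsupp F M hF hM hA u hu)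

/-- Recursive sup-norm bound for hidden states. -/
noncomputable def Bb (rw rv : ℕ → ℝ) (F : ℝ) : ℕ → ℕ → ℝ
  | 0, _ => 0
  | _ + 1, 0 => 1
  | t + 1, h + 1 =>
      rw (h + 1) * F * Bb rw rv F (t + 1) h + rv (h + 1) * F * Bb rw rv F t (h + 1)

/-- Recursive sup-norm bound for the difference of hidden states. -/
noncomputable def Db (rw rv : ℕ → ℝ) (F δ : ℝ) : ℕ → ℕ → ℝ
  | 0, _ => 0
  | _ + 1, 0 => 0
  | t + 1, h + 1 =>
      rw (h + 1) * F * Db rw rv F δ (t + 1) h + rw (h + 1) * δ * Bb rw rv F (t + 1) h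
        + rv (h + 1) * F * Db rw rv F δ t (h + 1) + rv (h + 1) * δ * Bb rw rv F t (h + 1)

lemma Bb_nonneg (rw rv : ℕ → ℝ) (F : ℝ) (hrw : ∀ k, 0 ≤ rw k) (hrv : ∀ k, 0 ≤ rv k)
    (hF : 0 ≤ F) : ∀ t h, 0 ≤ Bb rw rv F t h := by
  intro t
  induction t with
  | zero => intro h; simp [Bb]
  | succ t ih =>
    intro h
    induction h with
    | zero => simp [Bb]
    | succ h ih2 =>
      rw [Bb]
      have := hrw (h+1); have := hrv (h+1); have := ih (h+1)
      positivity

lemma Db_nonneg (rw rv : ℕ → ℝ) (F δ : ℝ) (hrw : ∀ k, 0 ≤ rw k) (hrv : ∀ k, 0 ≤ rv k)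
    (hF : 0 ≤ F) (hδ : 0 ≤ δ) : ∀ t h, 0 ≤ Db rw rv F δ t h := by
  intro t
  induction t with
  | zero => intro h; simp [Db]
  | succ t ih =>
    intro h
    induction h with
    | zero => simp [Db]
    | succ h ih2 =>
      rw [Db]
      have h1 := hrw (h+1); have h2 := hrv (h+1); have h3 := ih (h+1)
      have h4 := Bb_nonneg rw rv F hrw hrv hF (t+1) h
      have h5 := Bb_nonneg rw rv F hrw hrv hF t (h+1)
      positivity

lemma one_le_prod_real {s : Finset ℕ} {f : ℕ → ℝ} (hf : ∀ i ∈ s, 1 ≤ f i) :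
    (1:ℝ) ≤ ∏ i ∈ s, f i := by
  calc (1:ℝ) = ∏ _i ∈ s, (1:ℝ) := by simp
    _ ≤ ∏ i ∈ s, f i := Finset.prod_le_prod (by simp) hf

lemma single_le_prod_real {s : Finset ℕ} {f : ℕ → ℝ} (hf : ∀ i ∈ s, 1 ≤ f i) {a}
    (ha : a ∈ s) : f a ≤ ∏ i ∈ s, f i := by
  rw [← Finset.mul_prod_erase s f ha]
  have h1 : (1:ℝ) ≤ ∏ i ∈ s.erase a, f i :=
    one_le_prod_real fun i hi => hf i (Finset.mem_of_mem_erase hi)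
  nlinarith [hf a ha]

lemma Bb_le (rw rv : ℕ → ℝ) (F : ℝ) (hF : 1 ≤ F) (Hm : ℕ)
    (hw1 : ∀ k ∈ Finset.Icc 1 Hm, 1 ≤ rw k) (hv1 : ∀ k ∈ Finset.Icc 1 Hm, 1 ≤ rv k) :
    ∀ t h, h ≤ Hm →
      Bb rw rv F (t + 1) h ≤
        ((t : ℝ) + 1) ^ h * (∏ k ∈ Finset.Icc 1 h, rw k) * (∏ k ∈ Finset.Icc 1 Hm, rv k) ^ t
          * F ^ (h + t) := by
  have hF0 : (0:ℝ) ≤ F := le_trans zero_le_one hF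
  have hQ1 : (1:ℝ) ≤ ∏ k ∈ Finset.Icc 1 Hm, rv k := one_le_prod_real hv1
  have hQ0 : (0:ℝ) ≤ ∏ k ∈ Finset.Icc 1 Hm, rv k := le_trans zero_le_one hQ1
  set Q := ∏ k ∈ Finset.Icc 1 Hm, rv k with hQdef
  have hP1 : ∀ h, h ≤ Hm → (1:ℝ) ≤ ∏ k ∈ Finset.Icc 1 h, rw k := by
    intro h hh
    refine one_le_prod_real fun k hk => hw1 k ?_
    simp only [Finset.mem_Icc] at hk ⊢; omega
  intro t
  induction t with
  | zero =>
    intro h hh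
    induction h with
    | zero => simp [Bb]
    | succ h ih =>
      have hh' : h ≤ Hm := by omega
      have hw : 1 ≤ rw (h+1) := hw1 _ (by simp only [Finset.mem_Icc]; omega)
      simp only [Nat.cast_zero] at ih ⊢
      calc Bb rw rv F 1 (h+1)
          = rw (h+1) * F * Bb rw rv F 1 h := by rw [Bb]; simp [Bb]
        _ ≤ rw (h+1) * F * (((0:ℝ)+1)^h * (∏ k ∈ Finset.Icc 1 h, rw k) * Q ^ 0 * F ^ (h+0)) := by
            have h0 : (0:ℝ) ≤ rw (h+1) * F := by positivity
            exact mul_le_mul_of_nonneg_left (ih hh') h0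
        _ ≤ ((0:ℝ)+1)^(h+1) * (∏ k ∈ Finset.Icc 1 (h+1), rw k) * Q ^ 0 * F ^ (h+1+0) := by
            rw [Finset.prod_Icc_succ_top (by omega : 1 ≤ h+1), pow_succ]
            ring_nf
            exact le_refl _
  | succ s ih =>
    intro h hh
    induction h with
    | zero =>
      have h1 : (1:ℝ) ≤ Q ^ (s+1) := one_le_pow₀ hQ1
      have h2 : (1:ℝ) ≤ F ^ (0+(s+1)) := one_le_pow₀ hF
      simp only [Bb, pow_zero]
      calc (1:ℝ) = 1 * 1 := by ring
        _ ≤ Q ^ (s+1) * F ^ (0+(s+1)) := mul_le_mul h1 h2 zero_le_one (le_trans zero_le_one h1)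
        _ = ((s:ℝ)+1+1)^0 * (∏ k ∈ Finset.Icc 1 0, rw k) * Q ^ (s+1) * F ^ (0+(s+1)) := by
            simp
        _ = _ := by push_cast; ring
    | succ h ih2 =>
      have hh' : h ≤ Hm := by omega
      have hw : 1 ≤ rw (h+1) := hw1 _ (by simp only [Finset.mem_Icc]; omega)
      have hv : 1 ≤ rv (h+1) := hv1 _ (by simp only [Finset.mem_Icc]; omega)
      have hvQ : rv (h+1) ≤ Q := single_le_prod_real hv1 (by simp only [Finset.mem_Icc]; omega)
      have hP0 : (0:ℝ) ≤ ∏ k ∈ Finset.Icc 1 h, rw k := le_trans zero_le_one (hP1 h hh')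
      have hP10 : (0:ℝ) ≤ ∏ k ∈ Finset.Icc 1 (h+1), rw k := by
        have := hP1 (h+1) hh; linarith
      have key : ((s:ℝ)+2)^h + ((s:ℝ)+1)^(h+1) ≤ ((s:ℝ)+2)^(h+1) := by
        have hb : ((s:ℝ)+1)^h ≤ ((s:ℝ)+2)^h :=
          pow_le_pow_left₀ (by positivity) (by linarith) h
        have h2 : (0:ℝ) ≤ ((s:ℝ)+1) := by positivity
        have e1 : ((s:ℝ)+1)^(h+1) = ((s:ℝ)+1) * ((s:ℝ)+1)^h := by rw [pow_succ]; ring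
        have e2 : ((s:ℝ)+2)^(h+1) = ((s:ℝ)+2) * ((s:ℝ)+2)^h := by rw [pow_succ]; ring
        nlinarith [mul_le_mul_of_nonneg_left hb h2]
      have hKnn : (0:ℝ) ≤ (∏ k ∈ Finset.Icc 1 (h+1), rw k) * Q^(s+1) * F^(h+s+2) := by
        positivity
      have hnn2 : (0:ℝ) ≤ ((s:ℝ)+1)^(h+1) * ((∏ k ∈ Finset.Icc 1 (h+1), rw k) * Q^s * F^(h+s+2)) := by
        positivity
      push_cast
      calc Bb rw rv F (s+1+1) (h+1)
          = rw (h+1) * F * Bb rw rv F (s+1+1) h + rv (h+1) * F * Bb rw rv F (s+1) (h+1) := by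
            rw [Bb]
        _ ≤ rw (h+1) * F * (((s:ℝ)+1+1)^h * (∏ k ∈ Finset.Icc 1 h, rw k) * Q^(s+1) * F^(h+(s+1)))
            + rv (h+1) * F * (((s:ℝ)+1)^(h+1) * (∏ k ∈ Finset.Icc 1 (h+1), rw k) * Q^s * F^(h+1+s)) := by
            have b1 : Bb rw rv F (s+1+1) h ≤
                ((s:ℝ)+1+1)^h * (∏ k ∈ Finset.Icc 1 h, rw k) * Q^(s+1) * F^(h+(s+1)) := by
              have := ih2 hh'
              push_cast at this
              exact this
            have b2 := ih (h+1) hh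
            exact add_le_add (mul_le_mul_of_nonneg_left b1 (by positivity))
              (mul_le_mul_of_nonneg_left b2 (by positivity))
        _ = ((s:ℝ)+2)^h * ((∏ k ∈ Finset.Icc 1 (h+1), rw k) * Q^(s+1) * F^(h+s+2))
            + rv (h+1) * (((s:ℝ)+1)^(h+1) * ((∏ k ∈ Finset.Icc 1 (h+1), rw k) * Q^s * F^(h+s+2))) := by
            rw [Finset.prod_Icc_succ_top (by omega : 1 ≤ h+1)]
            ring
        _ ≤ ((s:ℝ)+2)^h * ((∏ k ∈ Finset.Icc 1 (h+1), rw k) * Q^(s+1) * F^(h+s+2))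
            + Q * (((s:ℝ)+1)^(h+1) * ((∏ k ∈ Finset.Icc 1 (h+1), rw k) * Q^s * F^(h+s+2))) := by
            have := mul_le_mul_of_nonneg_right hvQ hnn2
            linarith [this]
        _ = (((s:ℝ)+2)^h + ((s:ℝ)+1)^(h+1)) * ((∏ k ∈ Finset.Icc 1 (h+1), rw k) * Q^(s+1) * F^(h+s+2)) := by
            ring
        _ ≤ ((s:ℝ)+2)^(h+1) * ((∏ k ∈ Finset.Icc 1 (h+1), rw k) * Q^(s+1) * F^(h+s+2)) :=
            mul_le_mul_of_nonneg_right key hKnn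
        _ = ((s:ℝ)+1+1)^(h+1) * (∏ k ∈ Finset.Icc 1 (h+1), rw k) * Q^(s+1) * F^(h+1+(s+1)) := by
            ring_nf

lemma mono_prod {δ P P' Q F c c' : ℝ} {q q' e e' : ℕ} (hδ : 0 ≤ δ) (hP : 0 ≤ P) (hPP : P ≤ P')
    (hQ1 : 1 ≤ Q) (hF : 1 ≤ F) (hc : 0 ≤ c) (hcc : c ≤ c') (hq : q ≤ q') (he : e ≤ e') :
    c * δ * P * Q ^ q * F ^ e ≤ c' * δ * P' * Q ^ q' * F ^ e' := by
  have hQ0 : (0:ℝ) ≤ Q := le_trans zero_le_one hQ1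
  have hF0 : (0:ℝ) ≤ F := le_trans zero_le_one hF
  have hc' : (0:ℝ) ≤ c' := le_trans hc hcc
  have hP' : (0:ℝ) ≤ P' := le_trans hP hPP
  have h1 : Q ^ q ≤ Q ^ q' := pow_le_pow_right₀ hQ1 hq
  have h2 : F ^ e ≤ F ^ e' := pow_le_pow_right₀ hF he
  apply mul_le_mul _ h2 (pow_nonneg hF0 e) (by positivity)
  apply mul_le_mul _ h1 (pow_nonneg hQ0 q) (by positivity)
  apply mul_le_mul _ hPP hP (by positivity)
  exact mul_le_mul hcc le_rfl hδ hc'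

lemma key2 (h s : ℕ) :
    ((h:ℝ)+1) * ((s:ℝ)+2)^(h+2) + ((s:ℝ)+2)^(h+1) + ((h:ℝ)+2) * ((s:ℝ)+1)^(h+3)
      + ((s:ℝ)+1)^(h+2) ≤ ((h:ℝ)+2) * ((s:ℝ)+2)^(h+3) := by
  have hb0 : (0:ℝ) ≤ (s:ℝ)+1 := by positivity
  have hb2 : ((s:ℝ)+1)^(h+2) ≤ ((s:ℝ)+2)^(h+2) := pow_le_pow_left₀ hb0 (by linarith) _
  have hb1 : ((s:ℝ)+1)^(h+1) ≤ ((s:ℝ)+2)^(h+1) := pow_le_pow_left₀ hb0 (by linarith) _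
  have e3 : ((s:ℝ)+2)^(h+3) = ((s:ℝ)+2) * ((s:ℝ)+2)^(h+2) := by rw [pow_succ]; ring
  have e2 : ((s:ℝ)+2)^(h+2) = ((s:ℝ)+2) * ((s:ℝ)+2)^(h+1) := by rw [pow_succ]; ring
  have b3 : ((s:ℝ)+1)^(h+3) = ((s:ℝ)+1) * ((s:ℝ)+1)^(h+2) := by rw [pow_succ]; ring
  have hs0 : (0:ℝ) ≤ (s:ℝ) := Nat.cast_nonneg s
  have hh0 : (0:ℝ) ≤ (h:ℝ) := Nat.cast_nonneg h
  have hbb : ((s:ℝ)+1) * ((s:ℝ)+1)^(h+2) ≤ ((s:ℝ)+1) * ((s:ℝ)+2)^(h+2) :=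
    mul_le_mul_of_nonneg_left hb2 hb0
  have hbb1 : ((s:ℝ)+1) * ((s:ℝ)+1)^(h+1) ≤ ((s:ℝ)+1) * ((s:ℝ)+2)^(h+1) :=
    mul_le_mul_of_nonneg_left hb1 hb0
  have b2 : ((s:ℝ)+1)^(h+2) = ((s:ℝ)+1) * ((s:ℝ)+1)^(h+1) := by rw [pow_succ]; ring
  have hp1 : (0:ℝ) ≤ ((s:ℝ)+2)^(h+1) := by positivity
  nlinarith [mul_le_mul_of_nonneg_left hbb (by linarith : (0:ℝ) ≤ (h:ℝ)+2)]

lemma Db_le (rw rv : ℕ → ℝ) (F δ : ℝ) (hF : 1 ≤ F) (hδ : 0 ≤ δ) (Hm : ℕ)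
    (hw1 : ∀ k ∈ Finset.Icc 1 Hm, 1 ≤ rw k) (hv1 : ∀ k ∈ Finset.Icc 1 Hm, 1 ≤ rv k) :
    ∀ t h, h + 1 ≤ Hm →
      Db rw rv F δ (t + 1) (h + 1) ≤
        ((h:ℝ) + 1) * ((t : ℝ) + 1) ^ (h + 2) * δ * (∏ k ∈ Finset.Icc 1 (h+1), rw k)
          * (∏ k ∈ Finset.Icc 1 Hm, rv k) ^ t * F ^ (h * t + h + 2 * t) := by
  have hF0 : (0:ℝ) ≤ F := le_trans zero_le_one hF
  have hQ1 : (1:ℝ) ≤ ∏ k ∈ Finset.Icc 1 Hm, rv k := one_le_prod_real hv1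
  have hQ0 : (0:ℝ) ≤ ∏ k ∈ Finset.Icc 1 Hm, rv k := le_trans zero_le_one hQ1
  set Q := ∏ k ∈ Finset.Icc 1 Hm, rv k with hQdef
  have hP1 : ∀ h, h ≤ Hm → (1:ℝ) ≤ ∏ k ∈ Finset.Icc 1 h, rw k := by
    intro h hh
    refine one_le_prod_real fun k hk => hw1 k ?_
    simp only [Finset.mem_Icc] at hk ⊢; omega
  have hP0 : ∀ h, h ≤ Hm → (0:ℝ) ≤ ∏ k ∈ Finset.Icc 1 h, rw k := fun h hh =>
    le_trans zero_le_one (hP1 h hh)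
  have hPmono : ∀ h, h + 1 ≤ Hm → (∏ k ∈ Finset.Icc 1 h, rw k) ≤ ∏ k ∈ Finset.Icc 1 (h+1), rw k := by
    intro h hh
    rw [Finset.prod_Icc_succ_top (by omega : 1 ≤ h+1)]
    have h1 := hP0 h (by omega)
    have h2 := hw1 (h+1) (by simp only [Finset.mem_Icc]; omega)
    nlinarith
  intro t
  induction t with
  | zero =>
    intro h hh
    induction h with
    | zero =>
      have : Db rw rv F δ 1 1 = rw 1 * δ := by
        rw [Db]; simp [Db, Bb]
      rw [this]
      simp only [Nat.cast_zero, Finset.Icc_self, Finset.prod_singleton]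
      norm_num
      rw [mul_comm]
    | succ h ih =>
      have hh' : h + 1 ≤ Hm := by omega
      have hw : 1 ≤ rw (h+2) := hw1 _ (by simp only [Finset.mem_Icc]; omega)
      have hB := Bb_le rw rv F hF Hm hw1 hv1 0 (h+1) (by omega)
      simp only [Nat.cast_zero] at hB ih ⊢
      have hDb : Db rw rv F δ 1 (h+2) =
          rw (h+2) * F * Db rw rv F δ 1 (h+1) + rw (h+2) * δ * Bb rw rv F 1 (h+1) := by
        rw [Db]; simp [Db, Bb]
      rw [hDb]
      have hFh : F ^ 1 ≤ F ^ (h+1) := pow_le_pow_right₀ hF (by omega)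
      have hD := ih hh'
      have hPex : (∏ k ∈ Finset.Icc 1 (h+2), rw k) = (∏ k ∈ Finset.Icc 1 (h+1), rw k) * rw (h+2) := by
        rw [show h+2 = h+1+1 from rfl]
        exact Finset.prod_Icc_succ_top (by omega : 1 ≤ h+1+1) rw
      have hp1 := hP0 (h+1) hh'
      have hp2 := hP0 (h+2) hh
      calc rw (h+2) * F * Db rw rv F δ 1 (h+1) + rw (h+2) * δ * Bb rw rv F 1 (h+1)
          ≤ rw (h+2) * F * (((h:ℝ)+1) * (0+1)^(h+2) * δ * (∏ k ∈ Finset.Icc 1 (h+1), rw k)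
              * Q ^ 0 * F ^ (h*0+h+2*0))
            + rw (h+2) * δ * ((0+1)^(h+1) * (∏ k ∈ Finset.Icc 1 (h+1), rw k) * Q ^ 0 * F ^ (h+1+0)) := by
            exact add_le_add (mul_le_mul_of_nonneg_left hD (by positivity))
              (mul_le_mul_of_nonneg_left hB (by positivity))
        _ = ((h:ℝ)+1) * δ * (∏ k ∈ Finset.Icc 1 (h+2), rw k) * (F * F^h)
            + δ * (∏ k ∈ Finset.Icc 1 (h+2), rw k) * F^(h+1) := by
            rw [hPex]; ring
        _ = ((h:ℝ)+1) * δ * (∏ k ∈ Finset.Icc 1 (h+2), rw k) * F^(h+1)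
            + δ * (∏ k ∈ Finset.Icc 1 (h+2), rw k) * F^(h+1) := by
            rw [pow_succ]; ring
        _ = ((h:ℝ)+1+1) * (0+1)^(h+1+2) * δ * (∏ k ∈ Finset.Icc 1 (h+2), rw k) * Q ^ 0
            * F ^ ((h+1)*0+(h+1)+2*0) := by norm_num; ring
        _ = _ := by push_cast; rw [show h+1+1 = h+2 from rfl]
  | succ s ih =>
    intro h hh
    induction h with
    | zero =>
      have hw : 1 ≤ rw 1 := hw1 _ (by simp only [Finset.mem_Icc]; omega)
      have hv : 1 ≤ rv 1 := hv1 _ (by simp only [Finset.mem_Icc]; omega)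
      have hvQ : rv 1 ≤ Q := single_le_prod_real hv1 (by simp only [Finset.mem_Icc]; omega)
      have hp1 := hP0 1 hh
      have hDb : Db rw rv F δ (s+1+1) 1 =
          rw 1 * δ + rv 1 * F * Db rw rv F δ (s+1) 1 + rv 1 * δ * Bb rw rv F (s+1) 1 := by
        rw [Db]; simp [Db, Bb]; try ring
      have hD := ih 0 hh
      have hB := Bb_le rw rv F hF Hm hw1 hv1 s 1 (by omega)
      rw [← hQdef] at hB
      norm_num at hD hB
      have hrw0 : (0:ℝ) ≤ rw 1 := le_trans zero_le_one hw
      have hrv0 : (0:ℝ) ≤ rv 1 := le_trans zero_le_one hv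
      have hch : (1:ℝ) + ((s:ℝ)+1)^2 + ((s:ℝ)+1) ≤ ((s:ℝ)+1+1)^2 := by
        nlinarith [Nat.cast_nonneg (α := ℝ) s]
      have hA0 : (0:ℝ) ≤ ((s:ℝ)+1)^2 * δ * rw 1 * Q^s * F^(2*s) :=
        mul_nonneg (mul_nonneg (mul_nonneg (mul_nonneg (by positivity) hδ) hrw0)
          (pow_nonneg hQ0 s)) (pow_nonneg hF0 _)
      have hB0 : (0:ℝ) ≤ ((s:ℝ)+1) * rw 1 * Q^s * F^(1+s) :=
        mul_nonneg (mul_nonneg (mul_nonneg (by positivity) hrw0)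
          (pow_nonneg hQ0 s)) (pow_nonneg hF0 _)
      have hKnn : (0:ℝ) ≤ δ * rw 1 * Q^(s+1) * F^(2*(s+1)) :=
        mul_nonneg (mul_nonneg (mul_nonneg hδ hrw0) (pow_nonneg hQ0 _)) (pow_nonneg hF0 _)
      rw [hDb]
      calc rw 1 * δ + rv 1 * F * Db rw rv F δ (s+1) 1 + rv 1 * δ * Bb rw rv F (s+1) 1
          ≤ rw 1 * δ + rv 1 * F * (((s:ℝ)+1)^2 * δ * rw 1 * Q^s * F^(2*s))
            + rv 1 * δ * (((s:ℝ)+1) * rw 1 * Q^s * F^(1+s)) :=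
            add_le_add (add_le_add le_rfl (mul_le_mul_of_nonneg_left hD
              (mul_nonneg hrv0 hF0)))
              (mul_le_mul_of_nonneg_left hB (mul_nonneg hrv0 hδ))
        _ ≤ rw 1 * δ + Q * F * (((s:ℝ)+1)^2 * δ * rw 1 * Q^s * F^(2*s))
            + Q * δ * (((s:ℝ)+1) * rw 1 * Q^s * F^(1+s)) :=
            add_le_add (add_le_add le_rfl (mul_le_mul_of_nonneg_right
              (mul_le_mul_of_nonneg_right hvQ hF0) hA0))
              (mul_le_mul_of_nonneg_right (mul_le_mul_of_nonneg_right hvQ hδ) hB0)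
        _ = (1:ℝ) * δ * rw 1 * Q^0 * F^0 + ((s:ℝ)+1)^2 * δ * rw 1 * Q^(s+1) * F^(2*s+1)
            + ((s:ℝ)+1) * δ * rw 1 * Q^(s+1) * F^(1+s) := by ring
        _ ≤ (1:ℝ) * δ * rw 1 * Q^(s+1) * F^(2*(s+1)) + ((s:ℝ)+1)^2 * δ * rw 1 * Q^(s+1) * F^(2*(s+1))
            + ((s:ℝ)+1) * δ * rw 1 * Q^(s+1) * F^(2*(s+1)) := by
            refine add_le_add (add_le_add ?_ ?_) ?_
            · exact mono_prod hδ hrw0 le_rfl hQ1 hF zero_le_one le_rfl (by omega) (by omega)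
            · exact mono_prod hδ hrw0 le_rfl hQ1 hF (by positivity) le_rfl le_rfl (by omega)
            · exact mono_prod hδ hrw0 le_rfl hQ1 hF (by positivity) le_rfl le_rfl (by omega)
        _ = ((1:ℝ) + ((s:ℝ)+1)^2 + ((s:ℝ)+1)) * (δ * rw 1 * Q^(s+1) * F^(2*(s+1))) := by ring
        _ ≤ (((s:ℝ)+1+1)^2) * (δ * rw 1 * Q^(s+1) * F^(2*(s+1))) :=
            mul_le_mul_of_nonneg_right hch hKnn
        _ = _ := by push_cast; simp [Finset.Icc_self]; ring
    | succ h ih2 =>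
      have hh' : h + 1 ≤ Hm := by omega
      have hw : 1 ≤ rw (h+1+1) := hw1 _ (by simp only [Finset.mem_Icc]; omega)
      have hv : 1 ≤ rv (h+1+1) := hv1 _ (by simp only [Finset.mem_Icc]; omega)
      have hvQ : rv (h+1+1) ≤ Q := single_le_prod_real hv1 (by simp only [Finset.mem_Icc]; omega)
      have hrw0 : (0:ℝ) ≤ rw (h+1+1) := le_trans zero_le_one hw
      have hrv0 : (0:ℝ) ≤ rv (h+1+1) := le_trans zero_le_one hv
      have hp1 : (0:ℝ) ≤ ∏ k ∈ Finset.Icc 1 (h+1), rw k := hP0 (h+1) hh'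
      have hp2 : (0:ℝ) ≤ ∏ k ∈ Finset.Icc 1 (h+1+1), rw k := hP0 (h+1+1) hh
      have hPP : (∏ k ∈ Finset.Icc 1 (h+1), rw k) ≤ ∏ k ∈ Finset.Icc 1 (h+1+1), rw k :=
        hPmono (h+1) hh
      have hPex : (∏ k ∈ Finset.Icc 1 (h+1+1), rw k)
          = (∏ k ∈ Finset.Icc 1 (h+1), rw k) * rw (h+1+1) :=
        Finset.prod_Icc_succ_top (by omega : 1 ≤ h+1+1) rw
      have hD1 := ih2 hh'
      have hB1 := Bb_le rw rv F hF Hm hw1 hv1 (s+1) (h+1) hh'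
      have hD2 := ih (h+1) hh
      have hB2 := Bb_le rw rv F hF Hm hw1 hv1 s (h+1+1) hh
      rw [← hQdef] at hB1 hB2
      have hX3 : (0:ℝ) ≤ ((h:ℝ)+2) * ((s:ℝ)+1)^(h+3) * δ * (∏ k ∈ Finset.Icc 1 (h+1+1), rw k)
          * Q^s * F^((h+1)*s+(h+1)+2*s+1) := by
        refine mul_nonneg (mul_nonneg (mul_nonneg (mul_nonneg (by positivity) hδ) hp2)
          (pow_nonneg hQ0 _)) (pow_nonneg hF0 _)
      have hX4 : (0:ℝ) ≤ ((s:ℝ)+1)^(h+2) * δ * (∏ k ∈ Finset.Icc 1 (h+1+1), rw k)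
          * Q^s * F^(h+1+1+s) := by
        refine mul_nonneg (mul_nonneg (mul_nonneg (mul_nonneg (by positivity) hδ) hp2)
          (pow_nonneg hQ0 _)) (pow_nonneg hF0 _)
      have hKnn : (0:ℝ) ≤ δ * (∏ k ∈ Finset.Icc 1 (h+1+1), rw k) * Q^(s+1)
          * F^((h+1)*(s+1)+(h+1)+2*(s+1)) := by
        refine mul_nonneg (mul_nonneg (mul_nonneg hδ hp2) (pow_nonneg hQ0 _)) (pow_nonneg hF0 _)
      calc Db rw rv F δ (s+1+1) (h+1+1)
          = rw (h+1+1) * F * Db rw rv F δ (s+1+1) (h+1)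
            + rw (h+1+1) * δ * Bb rw rv F (s+1+1) (h+1)
            + rv (h+1+1) * F * Db rw rv F δ (s+1) (h+1+1)
            + rv (h+1+1) * δ * Bb rw rv F (s+1) (h+1+1) := by rw [Db]
        _ ≤ rw (h+1+1) * F * ((((h:ℝ)+1) * (((s+1:ℕ):ℝ)+1)^(h+2) * δ
                * (∏ k ∈ Finset.Icc 1 (h+1), rw k)) * Q^(s+1) * F^(h*(s+1)+h+2*(s+1)))
            + rw (h+1+1) * δ * (((((s+1:ℕ):ℝ)+1)^(h+1) * (∏ k ∈ Finset.Icc 1 (h+1), rw k))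
                * Q^(s+1) * F^(h+1+(s+1)))
            + rv (h+1+1) * F * (((((h+1:ℕ):ℝ)+1) * (((s:ℕ):ℝ)+1)^(h+1+2) * δ
                * (∏ k ∈ Finset.Icc 1 (h+1+1), rw k)) * Q^s * F^((h+1)*s+(h+1)+2*s))
            + rv (h+1+1) * δ * (((((s:ℕ):ℝ)+1)^(h+1+1) * (∏ k ∈ Finset.Icc 1 (h+1+1), rw k))
                * Q^s * F^(h+1+1+s)) := by
            refine add_le_add (add_le_add (add_le_add ?_ ?_) ?_) ?_
            · exact mul_le_mul_of_nonneg_left hD1 (mul_nonneg hrw0 hF0)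
            · exact mul_le_mul_of_nonneg_left hB1 (mul_nonneg hrw0 hδ)
            · exact mul_le_mul_of_nonneg_left hD2 (mul_nonneg hrv0 hF0)
            · exact mul_le_mul_of_nonneg_left hB2 (mul_nonneg hrv0 hδ)
        _ = ((h:ℝ)+1) * ((s:ℝ)+2)^(h+2) * δ * (∏ k ∈ Finset.Icc 1 (h+1+1), rw k) * Q^(s+1)
                * F^(h*(s+1)+h+2*(s+1)+1)
            + ((s:ℝ)+2)^(h+1) * δ * (∏ k ∈ Finset.Icc 1 (h+1+1), rw k) * Q^(s+1)
                * F^(h+1+(s+1))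
            + rv (h+1+1) * (((h:ℝ)+2) * ((s:ℝ)+1)^(h+3) * δ * (∏ k ∈ Finset.Icc 1 (h+1+1), rw k)
                * Q^s * F^((h+1)*s+(h+1)+2*s+1))
            + rv (h+1+1) * (((s:ℝ)+1)^(h+2) * δ * (∏ k ∈ Finset.Icc 1 (h+1+1), rw k)
                * Q^s * F^(h+1+1+s)) := by
            push_cast
            rw [hPex]
            ring
        _ ≤ ((h:ℝ)+1) * ((s:ℝ)+2)^(h+2) * δ * (∏ k ∈ Finset.Icc 1 (h+1+1), rw k) * Q^(s+1)
                * F^(h*(s+1)+h+2*(s+1)+1)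
            + ((s:ℝ)+2)^(h+1) * δ * (∏ k ∈ Finset.Icc 1 (h+1+1), rw k) * Q^(s+1)
                * F^(h+1+(s+1))
            + Q * (((h:ℝ)+2) * ((s:ℝ)+1)^(h+3) * δ * (∏ k ∈ Finset.Icc 1 (h+1+1), rw k)
                * Q^s * F^((h+1)*s+(h+1)+2*s+1))
            + Q * (((s:ℝ)+1)^(h+2) * δ * (∏ k ∈ Finset.Icc 1 (h+1+1), rw k)
                * Q^s * F^(h+1+1+s)) := by
            refine add_le_add (add_le_add le_rfl ?_) ?_
            · exact mul_le_mul_of_nonneg_right hvQ hX3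
            · exact mul_le_mul_of_nonneg_right hvQ hX4
        _ = ((h:ℝ)+1) * ((s:ℝ)+2)^(h+2) * δ * (∏ k ∈ Finset.Icc 1 (h+1+1), rw k) * Q^(s+1)
                * F^(h*(s+1)+h+2*(s+1)+1)
            + ((s:ℝ)+2)^(h+1) * δ * (∏ k ∈ Finset.Icc 1 (h+1+1), rw k) * Q^(s+1)
                * F^(h+1+(s+1))
            + ((h:ℝ)+2) * ((s:ℝ)+1)^(h+3) * δ * (∏ k ∈ Finset.Icc 1 (h+1+1), rw k) * Q^(s+1)
                * F^((h+1)*s+(h+1)+2*s+1)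
            + ((s:ℝ)+1)^(h+2) * δ * (∏ k ∈ Finset.Icc 1 (h+1+1), rw k) * Q^(s+1)
                * F^(h+1+1+s) := by ring
        _ ≤ ((h:ℝ)+1) * ((s:ℝ)+2)^(h+2) * δ * (∏ k ∈ Finset.Icc 1 (h+1+1), rw k) * Q^(s+1)
                * F^((h+1)*(s+1)+(h+1)+2*(s+1))
            + ((s:ℝ)+2)^(h+1) * δ * (∏ k ∈ Finset.Icc 1 (h+1+1), rw k) * Q^(s+1)
                * F^((h+1)*(s+1)+(h+1)+2*(s+1))
            + ((h:ℝ)+2) * ((s:ℝ)+1)^(h+3) * δ * (∏ k ∈ Finset.Icc 1 (h+1+1), rw k) * Q^(s+1)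
                * F^((h+1)*(s+1)+(h+1)+2*(s+1))
            + ((s:ℝ)+1)^(h+2) * δ * (∏ k ∈ Finset.Icc 1 (h+1+1), rw k) * Q^(s+1)
                * F^((h+1)*(s+1)+(h+1)+2*(s+1)) := by
            refine add_le_add (add_le_add (add_le_add ?_ ?_) ?_) ?_
            · exact mono_prod hδ hp2 le_rfl hQ1 hF (by positivity) le_rfl le_rfl (by nlinarith)
            · exact mono_prod hδ hp2 le_rfl hQ1 hF (by positivity) le_rfl le_rfl (by nlinarith)
            · exact mono_prod hδ hp2 le_rfl hQ1 hF (by positivity) le_rfl le_rfl (by nlinarith)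
            · exact mono_prod hδ hp2 le_rfl hQ1 hF (by positivity) le_rfl le_rfl (by nlinarith)
        _ = (((h:ℝ)+1) * ((s:ℝ)+2)^(h+2) + ((s:ℝ)+2)^(h+1) + ((h:ℝ)+2) * ((s:ℝ)+1)^(h+3)
              + ((s:ℝ)+1)^(h+2))
            * (δ * (∏ k ∈ Finset.Icc 1 (h+1+1), rw k) * Q^(s+1)
                * F^((h+1)*(s+1)+(h+1)+2*(s+1))) := by ring
        _ ≤ (((h:ℝ)+2) * ((s:ℝ)+2)^(h+3))
            * (δ * (∏ k ∈ Finset.Icc 1 (h+1+1), rw k) * Q^(s+1)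
                * F^((h+1)*(s+1)+(h+1)+2*(s+1))) :=
            mul_le_mul_of_nonneg_right (key2 h s) hKnn
        _ = _ := by push_cast; ring

lemma abs_psi_le {ψ : ℝ → ℝ} (hlip : LipschitzWith 1 ψ) (h0 : ψ 0 = 0) (y : ℝ) :
    |ψ y| ≤ |y| := by
  have := hlip.dist_le_mul y 0
  simpa [Real.dist_eq, h0] using this

lemma state_le (L : ℕ → ℕ)
    (wR W : (h : ℕ) → Matrix (Fin (L h)) (Fin (L (h - 1))) ℝ)
    (vR V : (h : ℕ) → Matrix (Fin (L h)) (Fin (L h)) ℝ)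
    (ψ : ℕ → ℝ → ℝ) (x : ℕ → Fin (L 0) → ℝ) (Hm : ℕ)
    (hψ : ∀ h, 1 ≤ h → h ≤ Hm → LipschitzWith 1 (ψ h) ∧ ψ h 0 = 0)
    (hx : ∀ s j, |x s j| ≤ 1)
    (F : ℝ) (hF0 : 0 ≤ F)
    (rw rv : ℕ → ℝ) (hrw0 : ∀ k, 0 ≤ rw k) (hrv0 : ∀ k, 0 ≤ rv k)
    (hrw : ∀ k, 1 ≤ k → k ≤ Hm → rw k = ((nnz (wR k)):ℝ))
    (hrv : ∀ k, 1 ≤ k → k ≤ Hm → rv k = ((nnz (vR k)):ℝ))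
    (hWsupp : ∀ k, 1 ≤ k → k ≤ Hm → ∀ j l, wR k j l = 0 → W k j l = 0)
    (hWF : ∀ k, 1 ≤ k → k ≤ Hm → ∀ j l, |W k j l| ≤ F)
    (hVsupp : ∀ k, 1 ≤ k → k ≤ Hm → ∀ j l, vR k j l = 0 → V k j l = 0)
    (hVF : ∀ k, 1 ≤ k → k ≤ Hm → ∀ j l, |V k j l| ≤ F) :
    ∀ t h, h ≤ Hm → ∀ j, |hiddenState L W V ψ x t h j| ≤ Bb rw rv F t h := by
  intro t
  induction t with
  | zero => intro h _ j; simp [hiddenState, Bb]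
  | succ t ih =>
    have main : ∀ h, h ≤ Hm → ∀ j,
        |zLayer L W V ψ (hiddenState L W V ψ x t) (x (t+1)) h j| ≤ Bb rw rv F (t+1) h := by
      intro h
      induction h with
      | zero =>
        intro _ j
        have : Bb rw rv F (t+1) 0 = 1 := by rw [Bb]
        rw [this]
        simpa [zLayer] using hx (t+1) j
      | succ h ih2 =>
        intro hh j
        have hh' : h ≤ Hm := by omega
        have hM1 : 0 ≤ Bb rw rv F (t+1) h := Bb_nonneg rw rv F hrw0 hrv0 hF0 _ _
        have hM2 : 0 ≤ Bb rw rv F t (h+1) := Bb_nonneg rw rv F hrw0 hrv0 hF0 _ _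
        have e : Bb rw rv F (t+1) (h+1) =
            ((nnz (wR (h+1)):ℝ)) * F * Bb rw rv F (t+1) h
              + ((nnz (vR (h+1)):ℝ)) * F * Bb rw rv F t (h+1) := by
          rw [Bb, hrw (h+1) (by omega) (by omega), hrv (h+1) (by omega) (by omega)]
        have lip := (hψ (h+1) (by omega) (by omega)).1
        have z0 := (hψ (h+1) (by omega) (by omega)).2
        simp only [zLayer]
        calc |ψ (h+1) ((W (h+1)).mulVec (zLayer L W V ψ (hiddenState L W V ψ x t) (x (t+1)) h) j
              + (V (h+1)).mulVec (hiddenState L W V ψ x t (h+1)) j)|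
            ≤ |(W (h+1)).mulVec (zLayer L W V ψ (hiddenState L W V ψ x t) (x (t+1)) h) j
              + (V (h+1)).mulVec (hiddenState L W V ψ x t (h+1)) j| := abs_psi_le lip z0 _
          _ ≤ |(W (h+1)).mulVec (zLayer L W V ψ (hiddenState L W V ψ x t) (x (t+1)) h) j|
              + |(V (h+1)).mulVec (hiddenState L W V ψ x t (h+1)) j| := abs_add_le _ _
          _ ≤ ((nnz (wR (h+1)):ℝ)) * F * Bb rw rv F (t+1) h
              + ((nnz (vR (h+1)):ℝ)) * F * Bb rw rv F t (h+1) := by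
              refine add_le_add ?_ ?_
              · exact abs_mulVec_le_s3 (W (h+1)) (wR (h+1))
                  (hWsupp (h+1) (by omega) (by omega)) F _ hF0 hM1
                  (hWF (h+1) (by omega) (by omega)) _ (fun k => ih2 hh' k) j
              · exact abs_mulVec_le_s3 (V (h+1)) (vR (h+1))
                  (hVsupp (h+1) (by omega) (by omega)) F _ hF0 hM2
                  (hVF (h+1) (by omega) (by omega)) _ (fun k => ih (h+1) hh k) j
          _ = Bb rw rv F (t+1) (h+1) := e.symm
    intro h hh j
    exact main h hh j

lemma diff_le (L : ℕ → ℕ)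
    (w w' : (h : ℕ) → Matrix (Fin (L h)) (Fin (L (h - 1))) ℝ)
    (v v' : (h : ℕ) → Matrix (Fin (L h)) (Fin (L h)) ℝ)
    (ψ : ℕ → ℝ → ℝ) (x : ℕ → Fin (L 0) → ℝ) (Hm : ℕ)
    (hψ : ∀ h, 1 ≤ h → h ≤ Hm → LipschitzWith 1 (ψ h) ∧ ψ h 0 = 0)
    (hx : ∀ s j, |x s j| ≤ 1)
    (F δ : ℝ) (hF0 : 0 ≤ F) (hδ0 : 0 ≤ δ)
    (rw rv : ℕ → ℝ) (hrw0 : ∀ k, 0 ≤ rw k) (hrv0 : ∀ k, 0 ≤ rv k)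
    (hrw : ∀ k, 1 ≤ k → k ≤ Hm → rw k = ((nnz (w k)):ℝ))
    (hrv : ∀ k, 1 ≤ k → k ≤ Hm → rv k = ((nnz (v k)):ℝ))
    (hWsupp : ∀ k, 1 ≤ k → k ≤ Hm → ∀ j l, w k j l = 0 → w' k j l = 0)
    (hWF : ∀ k, 1 ≤ k → k ≤ Hm → ∀ j l, |w k j l| ≤ F)
    (hW'F : ∀ k, 1 ≤ k → k ≤ Hm → ∀ j l, |w' k j l| ≤ F)
    (hWδ : ∀ k, 1 ≤ k → k ≤ Hm → ∀ j l, |w k j l - w' k j l| ≤ δ)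
    (hVsupp : ∀ k, 1 ≤ k → k ≤ Hm → ∀ j l, v k j l = 0 → v' k j l = 0)
    (hVF : ∀ k, 1 ≤ k → k ≤ Hm → ∀ j l, |v k j l| ≤ F)
    (hV'F : ∀ k, 1 ≤ k → k ≤ Hm → ∀ j l, |v' k j l| ≤ F)
    (hVδ : ∀ k, 1 ≤ k → k ≤ Hm → ∀ j l, |v k j l - v' k j l| ≤ δ) :
    ∀ t h, h ≤ Hm → ∀ j,
      |hiddenState L w v ψ x t h j - hiddenState L w' v' ψ x t h j| ≤ Db rw rv F δ t h := by
  have hstate := state_le L w w' v v' ψ x Hm hψ hx F hF0 rw rv hrw0 hrv0 hrw hrv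
    hWsupp hW'F hVsupp hV'F
  intro t
  induction t with
  | zero => intro h _ j; simp [hiddenState, Db]
  | succ t ih =>
    have main : ∀ h, h ≤ Hm → ∀ j,
        |zLayer L w v ψ (hiddenState L w v ψ x t) (x (t+1)) h j
          - zLayer L w' v' ψ (hiddenState L w' v' ψ x t) (x (t+1)) h j|
          ≤ Db rw rv F δ (t+1) h := by
      intro h
      induction h with
      | zero =>
        intro _ j
        have : Db rw rv F δ (t+1) 0 = 0 := by rw [Db]
        rw [this]
        simp [zLayer]
      | succ h ih2 =>
        intro hh j
        have hh' : h ≤ Hm := by omega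
        have hD1 : 0 ≤ Db rw rv F δ (t+1) h := Db_nonneg rw rv F δ hrw0 hrv0 hF0 hδ0 _ _
        have hD2 : 0 ≤ Db rw rv F δ t (h+1) := Db_nonneg rw rv F δ hrw0 hrv0 hF0 hδ0 _ _
        have hB1 : 0 ≤ Bb rw rv F (t+1) h := Bb_nonneg rw rv F hrw0 hrv0 hF0 _ _
        have hB2 : 0 ≤ Bb rw rv F t (h+1) := Bb_nonneg rw rv F hrw0 hrv0 hF0 _ _
        have e : Db rw rv F δ (t+1) (h+1) =
            ((nnz (w (h+1)):ℝ)) * F * Db rw rv F δ (t+1) h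
              + ((nnz (w (h+1)):ℝ)) * δ * Bb rw rv F (t+1) h
              + ((nnz (v (h+1)):ℝ)) * F * Db rw rv F δ t (h+1)
              + ((nnz (v (h+1)):ℝ)) * δ * Bb rw rv F t (h+1) := by
          rw [Db, hrw (h+1) (by omega) (by omega), hrv (h+1) (by omega) (by omega)]
        have lip := (hψ (h+1) (by omega) (by omega)).1
        have z0 := (hψ (h+1) (by omega) (by omega)).2
        have lippt : ∀ a b : ℝ, |ψ (h+1) a - ψ (h+1) b| ≤ |a - b| := by
          intro a b
          have := lip.dist_le_mul a b
          simpa [Real.dist_eq] using this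
        simp only [zLayer]
        set z := zLayer L w v ψ (hiddenState L w v ψ x t) (x (t+1)) h with hz
        set z' := zLayer L w' v' ψ (hiddenState L w' v' ψ x t) (x (t+1)) h with hz'
        set p := hiddenState L w v ψ x t (h+1) with hp
        set p' := hiddenState L w' v' ψ x t (h+1) with hp'
        have split : ((w (h+1)).mulVec z j + (v (h+1)).mulVec p j)
            - ((w' (h+1)).mulVec z' j + (v' (h+1)).mulVec p' j)
            = (w (h+1)).mulVec (z - z') j + (w (h+1) - w' (h+1)).mulVec z' j
              + (v (h+1)).mulVec (p - p') j + (v (h+1) - v' (h+1)).mulVec p' j := by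
          simp only [Matrix.mulVec_sub, Matrix.sub_mulVec, Pi.sub_apply]
          ring
        calc |ψ (h+1) ((w (h+1)).mulVec z j + (v (h+1)).mulVec p j)
              - ψ (h+1) ((w' (h+1)).mulVec z' j + (v' (h+1)).mulVec p' j)|
            ≤ |((w (h+1)).mulVec z j + (v (h+1)).mulVec p j)
              - ((w' (h+1)).mulVec z' j + (v' (h+1)).mulVec p' j)| := lippt _ _
          _ = |(w (h+1)).mulVec (z - z') j + (w (h+1) - w' (h+1)).mulVec z' j
              + (v (h+1)).mulVec (p - p') j + (v (h+1) - v' (h+1)).mulVec p' j| := by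
              rw [split]
          _ ≤ |(w (h+1)).mulVec (z - z') j| + |(w (h+1) - w' (h+1)).mulVec z' j|
              + |(v (h+1)).mulVec (p - p') j| + |(v (h+1) - v' (h+1)).mulVec p' j| := by
              exact le_trans (abs_add_le _ _) (add_le_add (le_trans (abs_add_le _ _)
                (add_le_add (abs_add_le _ _) le_rfl)) le_rfl)
          _ ≤ ((nnz (w (h+1)):ℝ)) * F * Db rw rv F δ (t+1) h
              + ((nnz (w (h+1)):ℝ)) * δ * Bb rw rv F (t+1) h
              + ((nnz (v (h+1)):ℝ)) * F * Db rw rv F δ t (h+1)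
              + ((nnz (v (h+1)):ℝ)) * δ * Bb rw rv F t (h+1) := by
              refine add_le_add (add_le_add (add_le_add ?_ ?_) ?_) ?_
              · exact abs_mulVec_le_s3 (w (h+1)) (w (h+1)) (fun j l hjl => hjl) F _ hF0 hD1
                  (hWF (h+1) (by omega) (by omega)) _ (fun k => ih2 hh' k) j
              · refine abs_mulVec_le_s3 (w (h+1) - w' (h+1)) (w (h+1)) ?_ δ _ hδ0 hB1 ?_ _
                  (fun k => hstate (t+1) h hh' k) j
                · intro j l hjl
                  simp [Matrix.sub_apply, hjl, hWsupp (h+1) (by omega) (by omega) j l hjl]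
                · intro j l
                  exact hWδ (h+1) (by omega) (by omega) j l
              · exact abs_mulVec_le_s3 (v (h+1)) (v (h+1)) (fun j l hjl => hjl) F _ hF0 hD2
                  (hVF (h+1) (by omega) (by omega)) _ (fun k => ih (h+1) hh k) j
              · refine abs_mulVec_le_s3 (v (h+1) - v' (h+1)) (v (h+1)) ?_ δ _ hδ0 hB2 ?_ _
                  (fun k => hstate t (h+1) hh k) j
                · intro j l hjl
                  simp [Matrix.sub_apply, hjl, hVsupp (h+1) (by omega) (by omega) j l hjl]
                · intro j l
                  exact hVδ (h+1) (by omega) (by omega) j l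
          _ = Db rw rv F δ (t+1) (h+1) := e.symm
    intro h hh j
    exact main h hh j

/-- Lemma (output difference between a sparse RNN `β = (w, v)` and a truncated approximation
`β̌ = (w', v')` supported on the support `γ` of `β` with `|β_j - β̌_j| ≤ δ₁` on `γ`):
for every `t ≥ 1`,
`∑_j |O_t(β)(j) - O_t(β̌)(j)| ≤ t^H H δ₁ (∏_{k=1}^H r_{w_k}) (∏_{k=1}^{H-1} r_{v_k})^{t-1}
  (E+δ₁)^{(H+1)t-2}`. -/
theorem output_diff_bound_truncated
    (H : ℕ) (hH : 2 ≤ H)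
    (L : ℕ → ℕ) (hL : ∀ h ≤ H, 1 ≤ L h)
    (w w' : (h : ℕ) → Matrix (Fin (L h)) (Fin (L (h - 1))) ℝ)
    (v v' : (h : ℕ) → Matrix (Fin (L h)) (Fin (L h)) ℝ)
    (ψ : ℕ → ℝ → ℝ)
    (hψ : ∀ h, 1 ≤ h → h ≤ H - 1 → LipschitzWith 1 (ψ h) ∧ ψ h 0 = 0)
    (x : ℕ → Fin (L 0) → ℝ) (hx : ∀ s j, |x s j| ≤ 1)
    (E : ℝ) (hE : 1 ≤ E)
    (hwE : ∀ h, 1 ≤ h → h ≤ H → ∀ j k, |w h j k| ≤ E)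
    (hvE : ∀ h, 1 ≤ h → h ≤ H - 1 → ∀ j k, |v h j k| ≤ E)
    (hwr : ∀ h, 1 ≤ h → h ≤ H → 1 ≤ nnz (w h))
    (hvr : ∀ h, 1 ≤ h → h ≤ H - 1 → 1 ≤ nnz (v h))
    (δ₁ : ℝ) (hδ₁ : 0 ≤ δ₁)
    (hwclose : ∀ h, 1 ≤ h → h ≤ H → ∀ j k,
      (w h j k = 0 → w' h j k = 0) ∧ (w h j k ≠ 0 → |w h j k - w' h j k| ≤ δ₁))
    (hvclose : ∀ h, 1 ≤ h → h ≤ H - 1 → ∀ j k,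
      (v h j k = 0 → v' h j k = 0) ∧ (v h j k ≠ 0 → |v h j k - v' h j k| ≤ δ₁))
    (t : ℕ) (ht : 1 ≤ t) :
    ∑ j, |output L H w v ψ x t j - output L H w' v' ψ x t j| ≤
      (t : ℝ) ^ H * (H : ℝ) * δ₁ * (∏ k ∈ Finset.Icc 1 H, (nnz (w k) : ℝ))
        * (∏ k ∈ Finset.Icc 1 (H - 1), (nnz (v k) : ℝ)) ^ (t - 1)
        * (E + δ₁) ^ ((H + 1) * t - 2) := by
  obtain ⟨g, rfl⟩ : ∃ g, H = g + 2 := ⟨H - 2, by omega⟩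
  obtain ⟨s, rfl⟩ : ∃ s, t = s + 1 := ⟨t - 1, by omega⟩
  set F := E + δ₁ with hFdef
  have hF : (1:ℝ) ≤ F := by simp only [hFdef]; linarith
  have hF0 : (0:ℝ) ≤ F := le_trans zero_le_one hF
  set rwf : ℕ → ℝ := fun k => ((nnz (w k)):ℝ) with hrwf
  set rvf : ℕ → ℝ := fun k => ((nnz (v k)):ℝ) with hrvf
  have hrw0 : ∀ k, 0 ≤ rwf k := fun k => Nat.cast_nonneg _
  have hrv0 : ∀ k, 0 ≤ rvf k := fun k => Nat.cast_nonneg _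
  have hw1 : ∀ k ∈ Finset.Icc 1 (g+1), 1 ≤ rwf k := by
    intro k hk
    simp only [Finset.mem_Icc] at hk
    have h9 : (1:ℝ) ≤ ((nnz (w k)):ℝ) := by exact_mod_cast hwr k hk.1 (by omega)
    exact h9
  have hv1 : ∀ k ∈ Finset.Icc 1 (g+1), 1 ≤ rvf k := by
    intro k hk
    simp only [Finset.mem_Icc] at hk
    have h9 : (1:ℝ) ≤ ((nnz (v k)):ℝ) := by exact_mod_cast hvr k hk.1 (by omega)
    exact h9
  have hψ' : ∀ h, 1 ≤ h → h ≤ g+1 → LipschitzWith 1 (ψ h) ∧ ψ h 0 = 0 := by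
    intro h h1 h2; exact hψ h h1 (by omega)
  -- entry bounds
  have hwδ : ∀ k, 1 ≤ k → k ≤ g+2 → ∀ j l, |w k j l - w' k j l| ≤ δ₁ := by
    intro k h1 h2 j l
    by_cases hz : w k j l = 0
    · rw [hz, (hwclose k h1 h2 j l).1 hz]; simpa using hδ₁
    · exact (hwclose k h1 h2 j l).2 hz
  have hvδ : ∀ k, 1 ≤ k → k ≤ g+1 → ∀ j l, |v k j l - v' k j l| ≤ δ₁ := by
    intro k h1 h2 j l
    by_cases hz : v k j l = 0
    · rw [hz, (hvclose k h1 (by omega) j l).1 hz]; simpa using hδ₁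
    · exact (hvclose k h1 (by omega) j l).2 hz
  have hwF : ∀ k, 1 ≤ k → k ≤ g+2 → ∀ j l, |w k j l| ≤ F := by
    intro k h1 h2 j l
    have := hwE k h1 h2 j l
    simp only [hFdef]; linarith
  have hvF : ∀ k, 1 ≤ k → k ≤ g+1 → ∀ j l, |v k j l| ≤ F := by
    intro k h1 h2 j l
    have := hvE k h1 (by omega) j l
    simp only [hFdef]; linarith
  have hw'F : ∀ k, 1 ≤ k → k ≤ g+2 → ∀ j l, |w' k j l| ≤ F := by
    intro k h1 h2 j l
    have h3 := hwδ k h1 h2 j l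
    have h4 := hwE k h1 h2 j l
    have h5 : |w' k j l| = |w k j l - (w k j l - w' k j l)| := by ring_nf
    rw [h5]
    refine le_trans (abs_sub _ _) ?_
    simp only [hFdef]; linarith
  have hv'F : ∀ k, 1 ≤ k → k ≤ g+1 → ∀ j l, |v' k j l| ≤ F := by
    intro k h1 h2 j l
    have h3 := hvδ k h1 h2 j l
    have h4 := hvE k h1 (by omega) j l
    have h5 : |v' k j l| = |v k j l - (v k j l - v' k j l)| := by ring_nf
    rw [h5]
    refine le_trans (abs_sub _ _) ?_
    simp only [hFdef]; linarith
  have hwsupp : ∀ k, 1 ≤ k → k ≤ g+2 → ∀ j l, w k j l = 0 → w' k j l = 0 := by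
    intro k h1 h2 j l hz; exact (hwclose k h1 h2 j l).1 hz
  have hvsupp : ∀ k, 1 ≤ k → k ≤ g+1 → ∀ j l, v k j l = 0 → v' k j l = 0 := by
    intro k h1 h2 j l hz; exact (hvclose k h1 (by omega) j l).1 hz
  have hdiff := diff_le L w w' v v' ψ x (g+1) hψ' hx F δ₁ hF0 hδ₁ rwf rvf hrw0 hrv0
    (fun k _ _ => rfl) (fun k _ _ => rfl)
    (fun k h1 h2 => hwsupp k h1 (by omega)) (fun k h1 h2 => hwF k h1 (by omega))
    (fun k h1 h2 => hw'F k h1 (by omega)) (fun k h1 h2 => hwδ k h1 (by omega))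
    hvsupp hvF hv'F hvδ
  have hstate := state_le L w w' v v' ψ x (g+1) hψ' hx F hF0 rwf rvf hrw0 hrv0
    (fun k _ _ => rfl) (fun k _ _ => rfl)
    (fun k h1 h2 => hwsupp k h1 (by omega)) (fun k h1 h2 => hw'F k h1 (by omega))
    hvsupp hv'F
  -- the two sum bounds
  set zf := hiddenState L w v ψ x (s+1) (g+1) with hzf
  set zf' := hiddenState L w' v' ψ x (s+1) (g+1) with hzf'
  have hDnn : 0 ≤ Db rwf rvf F δ₁ (s+1) (g+1) := Db_nonneg _ _ _ _ hrw0 hrv0 hF0 hδ₁ _ _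
  have hBnn : 0 ≤ Bb rwf rvf F (s+1) (g+1) := Bb_nonneg _ _ _ hrw0 hrv0 hF0 _ _
  have hsum1 : ∑ j, |(w (g+2)).mulVec (zf - zf') j| ≤
      ((nnz (w (g+2)):ℝ)) * F * Db rwf rvf F δ₁ (s+1) (g+1) := by
    refine sum_abs_mulVec_le_s3 _ (w (g+2)) (fun j l hjl => hjl) F _ hF0 hDnn
      (hwF (g+2) (by omega) (by omega)) _ ?_
    intro k
    simpa using hdiff (s+1) (g+1) le_rfl k
  have hsum2 : ∑ j, |(w (g+2) - w' (g+2)).mulVec zf' j| ≤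
      ((nnz (w (g+2)):ℝ)) * δ₁ * Bb rwf rvf F (s+1) (g+1) := by
    refine sum_abs_mulVec_le_s3 _ (w (g+2)) ?_ δ₁ _ hδ₁ hBnn ?_ _ ?_
    · intro j l hjl
      simp [Matrix.sub_apply, hjl, hwsupp (g+2) (by omega) (by omega) j l hjl]
    · intro j l
      exact hwδ (g+2) (by omega) (by omega) j l
    · intro k
      exact hstate (s+1) (g+1) le_rfl k
  have hsplit : ∀ j, output L (g+2) w v ψ x (s+1) j - output L (g+2) w' v' ψ x (s+1) j
      = (w (g+2)).mulVec (zf - zf') j + (w (g+2) - w' (g+2)).mulVec zf' j := by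
    intro j
    show (w (g+2)).mulVec (hiddenState L w v ψ x (s+1) (g+1)) j
        - (w' (g+2)).mulVec (hiddenState L w' v' ψ x (s+1) (g+1)) j = _
    simp only [Matrix.mulVec_sub, Matrix.sub_mulVec, Pi.sub_apply, hzf, hzf']
    ring
  -- closed forms
  have hDb := Db_le rwf rvf F δ₁ hF hδ₁ (g+1) hw1 hv1 s g le_rfl
  have hBb := Bb_le rwf rvf F hF (g+1) hw1 hv1 s (g+1) le_rfl
  set Q := ∏ k ∈ Finset.Icc 1 (g+1), rvf k with hQdef
  set P1 := ∏ k ∈ Finset.Icc 1 (g+1), rwf k with hP1def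
  have hQ1 : (1:ℝ) ≤ Q := one_le_prod_real hv1
  have hQ0 : (0:ℝ) ≤ Q := le_trans zero_le_one hQ1
  have hP11 : (1:ℝ) ≤ P1 := one_le_prod_real hw1
  have hP10 : (0:ℝ) ≤ P1 := le_trans zero_le_one hP11
  have hN1 : (1:ℝ) ≤ rwf (g+2) := by
    have h9 : (1:ℝ) ≤ ((nnz (w (g+2))):ℝ) := by exact_mod_cast hwr (g+2) (by omega) (by omega)
    exact h9
  have hN0 : (0:ℝ) ≤ rwf (g+2) := le_trans zero_le_one hN1
  have hPH : (∏ k ∈ Finset.Icc 1 (g+2), rwf k) = P1 * rwf (g+2) := by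
    rw [hP1def, show g+2 = g+1+1 from rfl]
    exact Finset.prod_Icc_succ_top (by omega) rwf
  have hPH0 : (0:ℝ) ≤ P1 * rwf (g+2) := mul_nonneg hP10 hN0
  have hcoef : ((g:ℝ)+1) * ((s:ℝ)+1)^(g+2) + ((s:ℝ)+1)^(g+1) ≤ ((g:ℝ)+2) * ((s:ℝ)+1)^(g+2) := by
    have h1 : ((s:ℝ)+1)^(g+1) ≤ ((s:ℝ)+1)^(g+2) :=
      pow_le_pow_right₀ (by have := Nat.cast_nonneg (α := ℝ) s; linarith) (by omega)
    linarith
  have hKnn : (0:ℝ) ≤ δ₁ * (P1 * rwf (g+2)) * Q^s * F^(g*s+g+3*s+1) :=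
    mul_nonneg (mul_nonneg (mul_nonneg hδ₁ hPH0) (pow_nonneg hQ0 _)) (pow_nonneg hF0 _)
  have hexp : (g+2+1)*(s+1)-2 = g*s+g+3*s+1 := by
    rw [show (g+2+1)*(s+1) = (g*s+g+3*s+1)+2 from by ring]
    exact Nat.add_sub_cancel (g*s+g+3*s+1) 2
  calc ∑ j, |output L (g+2) w v ψ x (s+1) j - output L (g+2) w' v' ψ x (s+1) j|
      = ∑ j, |(w (g+2)).mulVec (zf - zf') j + (w (g+2) - w' (g+2)).mulVec zf' j| :=
        Finset.sum_congr rfl (fun j _ => by rw [hsplit j])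
    _ ≤ ∑ j, (|(w (g+2)).mulVec (zf - zf') j| + |(w (g+2) - w' (g+2)).mulVec zf' j|) :=
        Finset.sum_le_sum (fun j _ => abs_add_le _ _)
    _ = ∑ j, |(w (g+2)).mulVec (zf - zf') j| + ∑ j, |(w (g+2) - w' (g+2)).mulVec zf' j| :=
        Finset.sum_add_distrib
    _ ≤ ((nnz (w (g+2)):ℝ)) * F * Db rwf rvf F δ₁ (s+1) (g+1)
        + ((nnz (w (g+2)):ℝ)) * δ₁ * Bb rwf rvf F (s+1) (g+1) := add_le_add hsum1 hsum2
    _ ≤ rwf (g+2) * F * (((g:ℝ)+1) * ((s:ℝ)+1)^(g+2) * δ₁ * P1 * Q^s * F^(g*s+g+2*s))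
        + rwf (g+2) * δ₁ * (((s:ℝ)+1)^(g+1) * P1 * Q^s * F^(g+1+s)) := by
        refine add_le_add ?_ ?_
        · exact mul_le_mul_of_nonneg_left hDb (mul_nonneg hN0 hF0)
        · exact mul_le_mul_of_nonneg_left hBb (mul_nonneg hN0 hδ₁)
    _ = ((g:ℝ)+1) * ((s:ℝ)+1)^(g+2) * δ₁ * (P1 * rwf (g+2)) * Q^s * F^(g*s+g+2*s+1)
        + ((s:ℝ)+1)^(g+1) * δ₁ * (P1 * rwf (g+2)) * Q^s * F^(g+1+s) := by ring
    _ ≤ ((g:ℝ)+1) * ((s:ℝ)+1)^(g+2) * δ₁ * (P1 * rwf (g+2)) * Q^s * F^(g*s+g+3*s+1)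
        + ((s:ℝ)+1)^(g+1) * δ₁ * (P1 * rwf (g+2)) * Q^s * F^(g*s+g+3*s+1) := by
        refine add_le_add ?_ ?_
        · exact mono_prod hδ₁ hPH0 le_rfl hQ1 hF (by positivity) le_rfl le_rfl (by nlinarith)
        · exact mono_prod hδ₁ hPH0 le_rfl hQ1 hF (by positivity) le_rfl le_rfl (by nlinarith)
    _ = (((g:ℝ)+1) * ((s:ℝ)+1)^(g+2) + ((s:ℝ)+1)^(g+1))
        * (δ₁ * (P1 * rwf (g+2)) * Q^s * F^(g*s+g+3*s+1)) := by ring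
    _ ≤ (((g:ℝ)+2) * ((s:ℝ)+1)^(g+2))
        * (δ₁ * (P1 * rwf (g+2)) * Q^s * F^(g*s+g+3*s+1)) :=
        mul_le_mul_of_nonneg_right hcoef hKnn
    _ = _ := by
        rw [show g+2-1 = g+1 from rfl, show s+1-1 = s from rfl, hexp, ← hQdef, ← hPH]
        push_cast
        ring
end
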